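/- Let M be a II₁ factor acting in standard position on H with tracial vector ξ, let P ⊆ M with P′ ∩ M ⊆ P, and suppose N is another II₁ factor on H containing P such that ξ is also a tracial vector for N, ⟨M, e_P⟩ = ⟨N, e_P⟩, and (u_n)_{n≥0} is a bounded homogeneous orthonormal basis of normalizers for P ⊆ M. If (v_n)_{n≥0} are normalizers in N(P ⊆ N) with v₀ = I and ‖v_n − u_n‖ < 1 for all n, then the closed subspaces satisfy cl(u_n P ξ) = cl(v_n P ξ) for each n, and consequently (v_n) is a bounded homogeneous orthonormal basis of normalizers for P ⊆ N; in particular N = (P ∪ {v_n : n ≥ 0})″. -/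

import Mathlib

noncomputable section

variable {H : Type*} [NormedAddCommGroup H] [InnerProductSpace ℂ H] [CompleteSpace H]

/-- The near inclusion `M ⊆_γ N`: every `x ∈ M` admits `y ∈ N` with `‖x - y‖ ≤ γ‖x‖`. -/
def NearIncl (M N : Set (H →L[ℂ] H)) (γ : ℝ) : Prop :=
  ∀ x ∈ M, ∃ y ∈ N, ‖x - y‖ ≤ γ * ‖x‖

/-- A von Neumann algebra is a factor if its center consists of scalars. -/
def IsFactor (M : VonNeumannAlgebra H) : Prop :=
  ∀ x ∈ M, (∀ y ∈ M, x * y = y * x) → ∃ c : ℂ, x = c • (1 : H →L[ℂ] H)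

/-- A von Neumann algebra is diffuse if it has no minimal projections. -/
def IsDiffuse (M : VonNeumannAlgebra H) : Prop :=
  ∀ p : H →L[ℂ] H, p ∈ M → IsSelfAdjoint p → IsIdempotentElem p → p ≠ 0 →
    ∃ q : H →L[ℂ] H, q ∈ M ∧ IsSelfAdjoint q ∧ IsIdempotentElem q ∧
      q * p = q ∧ p * q = q ∧ q ≠ 0 ∧ q ≠ p

/-- `τ` is a faithful tracial state on the von Neumann algebra `M`. -/
def IsTracialState (M : VonNeumannAlgebra H) (τ : (H →L[ℂ] H) →ₗ[ℂ] ℂ) : Prop :=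
  τ 1 = 1 ∧ (∀ x ∈ M, 0 ≤ (τ (star x * x)).re ∧ (τ (star x * x)).im = 0) ∧
    (∀ x ∈ M, ∀ y ∈ M, τ (x * y) = τ (y * x)) ∧
    (∀ x ∈ M, τ (star x * x) = 0 → x = 0)

/-- `M` is a II₁ factor with (unique) tracial state `τ`: an infinite-dimensional
(diffuse) finite factor. -/
def IsIIOneFactor (M : VonNeumannAlgebra H) (τ : (H →L[ℂ] H) →ₗ[ℂ] ℂ) : Prop :=
  IsFactor M ∧ IsDiffuse M ∧ IsTracialState M τ

/-- The orthogonal projection of `H` onto the closed subspace generated by `S`. -/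
def projCl (S : Set H) : H →L[ℂ] H :=
  letI K := (Submodule.span ℂ S).topologicalClosure
  haveI : CompleteSpace K := (Submodule.isClosed_topologicalClosure _).completeSpace_coe
  K.subtypeL ∘L K.orthogonalProjectionOnto

/-- The closed subspace `cl(w P ξ)` of `H`. -/
def subsp (P : VonNeumannAlgebra H) (ξ : H) (w : H →L[ℂ] H) : Submodule ℂ H :=
  (Submodule.span ℂ {y : H | ∃ p ∈ P, (w * p) ξ = y}).topologicalClosure

/-- `u` is a unitary normalizing `P`: `uPu* = P`. -/
def IsNormalizer (P : VonNeumannAlgebra H) (u : H →L[ℂ] H) : Prop :=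
  u ∈ unitary (H →L[ℂ] H) ∧ (∀ p ∈ P, u * p * star u ∈ P) ∧ ∀ p ∈ P, star u * p * u ∈ P

/-- `(u n)` is a bounded homogeneous orthonormal basis of normalizers for `P ⊆ A`,
formulated on the Hilbert space via the tracial vector `ξ`: `u 0 = 1`, each `u n` is a
normalizer of `P` lying in `A`, the subspaces `cl(u_i P ξ)` are pairwise orthogonal, and
their span is dense in `H`. -/
def IsBHONB (A P : VonNeumannAlgebra H) (ξ : H) (u : ℕ → (H →L[ℂ] H)) : Prop :=
  u 0 = 1 ∧ (∀ n, u n ∈ A ∧ IsNormalizer P (u n)) ∧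
    (∀ i j, i ≠ j → ∀ y ∈ subsp P ξ (u i), ∀ z ∈ subsp P ξ (u j),
      (inner ℂ y z : ℂ) = 0) ∧
    Dense (↑(⨆ n, subsp P ξ (u n)) : Set H)


namespace S16
open scoped InnerProductSpace


variable {H : Type*} [NormedAddCommGroup H] [InnerProductSpace ℂ H] [CompleteSpace H]

/-- Extension of a boundedly-controlled pair of linear maps along a dense range. -/
theorem ext_op {G : Type*} [AddCommGroup G] [Module ℂ G]
    (L R : G →ₗ[ℂ] H) (C : ℝ)
    (hb : ∀ g, ‖R g‖ ≤ C * ‖L g‖)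
    (hd : Dense (Set.range L : Set H)) :
    ∃ A : H →L[ℂ] H, ∀ g, A (L g) = R g := by
  have hwd : ∀ g g', L g = L g' → R g = R g' := by
    intro g g' h
    have h0 : L (g - g') = 0 := by rw [map_sub, h, sub_self]
    have := hb (g - g')
    rw [h0, norm_zero, mul_zero] at this
    have : R (g - g') = 0 := norm_le_zero_iff.1 this
    rw [map_sub, sub_eq_zero] at this; exact this
  set D : Submodule ℂ H := LinearMap.range L with hD
  have hmem : ∀ y : D, ∃ g, L g = (y : H) := fun y => y.2
  have key : ∀ y : D, ∀ g, L g = (y : H) → R ((hmem y).choose) = R g := by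
    intro y g h; exact hwd _ _ (((hmem y).choose_spec).trans h.symm)
  have keyv : ∀ (y z : D) (g : G), L g = (y : H) + (z : H) →
      R ((hmem y).choose) + R ((hmem z).choose) = R g := by
    intro y z g h
    have : L ((hmem y).choose + (hmem z).choose) = L g := by
      rw [map_add, (hmem y).choose_spec, (hmem z).choose_spec, h]
    rw [← hwd _ _ this, map_add]
  have keys : ∀ (c : ℂ) (y : D) (g : G), L g = c • (y : H) →
      c • R ((hmem y).choose) = R g := by
    intro c y g h
    have : L (c • (hmem y).choose) = L g := by
      rw [map_smul, (hmem y).choose_spec, h]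
    rw [← hwd _ _ this, map_smul]
  let f₀ : D →ₗ[ℂ] H :=
    { toFun := fun y => R ((hmem y).choose)
      map_add' := fun y z => (keyv y z ((hmem (y + z)).choose) ((hmem (y+z)).choose_spec)).symm
      map_smul' := fun c y => (keys c y ((hmem (c • y)).choose) ((hmem (c • y)).choose_spec)).symm }
  have hf₀ : ∀ y : D, ‖f₀ y‖ ≤ C * ‖(y : H)‖ := by
    intro y
    calc ‖R ((hmem y).choose)‖ ≤ C * ‖L ((hmem y).choose)‖ := hb _
    _ = C * ‖(y : H)‖ := by rw [(hmem y).choose_spec]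
  let f : D →L[ℂ] H := LinearMap.mkContinuous f₀ C hf₀
  have hdr : DenseRange (⇑(D.subtypeL)) := by
    have : Set.range ⇑(D.subtypeL) = (D : Set H) := Subtype.range_coe
    rw [DenseRange, this]
    have : (D : Set H) = Set.range L := rfl
    rw [this]; exact hd
  have hui : IsUniformInducing (⇑(D.subtypeL)) :=
    isUniformEmbedding_subtype_val.toIsUniformInducing
  refine ⟨f.extend D.subtypeL, fun g => ?_⟩
  have h1 : L g = D.subtypeL ⟨L g, LinearMap.mem_range_self L g⟩ := rfl
  rw [h1, ContinuousLinearMap.extend_eq (h_dense := hdr) (h_e := hui)]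
  show f₀ _ = R g
  exact key ⟨L g, LinearMap.mem_range_self L g⟩ g rfl


theorem inner_star_left (B : H →L[ℂ] H) (z w : H) :
    ⟪B z, w⟫_ℂ = ⟪z, (star B) w⟫_ℂ := by
  rw [ContinuousLinearMap.star_eq_adjoint, ContinuousLinearMap.adjoint_inner_right]

theorem inner_star_right (B : H →L[ℂ] H) (z w : H) :
    ⟪z, B w⟫_ℂ = ⟪(star B) z, w⟫_ℂ := by
  rw [ContinuousLinearMap.star_eq_adjoint, ContinuousLinearMap.adjoint_inner_left]

section proj
variable (U : Submodule ℂ H) (hU : IsClosed (U : Set H))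

/-- The orthogonal projection onto a closed submodule, as a CLM on `H`. -/
def prj : H →L[ℂ] H :=
  haveI : CompleteSpace U := hU.completeSpace_coe
  U.subtypeL ∘L U.orthogonalProjectionOnto

theorem prj_sa : IsSelfAdjoint (prj U hU) := by
  haveI : CompleteSpace U := hU.completeSpace_coe
  exact isSelfAdjoint_starProjection U

theorem prj_mem (x : H) : prj U hU x ∈ U := by
  haveI : CompleteSpace U := hU.completeSpace_coe
  exact (U.orthogonalProjectionOnto x).2

theorem prj_eq_self {x : H} (hx : x ∈ U) : prj U hU x = x := by
  haveI : CompleteSpace U := hU.completeSpace_coe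
  exact Submodule.starProjection_eq_self_iff.2 hx

theorem prj_eq_zero {x : H} (hx : x ∈ Uᗮ) : prj U hU x = 0 := by
  haveI : CompleteSpace U := hU.completeSpace_coe
  show (U.subtypeL) (U.orthogonalProjectionOnto x) = 0
  rw [Submodule.orthogonalProjectionOnto_apply_of_mem_orthogonal hx]
  simp

theorem prj_idem : prj U hU ∘L prj U hU = prj U hU := by
  ext x; exact prj_eq_self U hU (prj_mem U hU x)

theorem sub_prj_mem_orthogonal (x : H) : x - prj U hU x ∈ Uᗮ := by
  haveI : CompleteSpace U := hU.completeSpace_coe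
  exact Submodule.sub_starProjection_mem_orthogonal x

/-- Uniqueness: a self-adjoint idempotent with the right range is the orthogonal
projection. -/
theorem prj_unique (Q : H →L[ℂ] H) (hsa : IsSelfAdjoint Q)
    (hran : ∀ x, Q x ∈ U) (hid : ∀ x ∈ U, Q x = x) :
    Q = prj U hU := by
  haveI : CompleteSpace U := hU.completeSpace_coe
  ext x
  have horth : x - Q x ∈ Uᗮ := by
    rw [Submodule.mem_orthogonal]
    intro u hu
    have hQu : Q u = u := hid u hu
    have : ⟪u, Q x⟫_ℂ = ⟪u, x⟫_ℂ := by
      calc ⟪u, Q x⟫_ℂ = ⟪Q u, x⟫_ℂ := by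
            rw [← ContinuousLinearMap.adjoint_inner_left, ← ContinuousLinearMap.star_eq_adjoint, hsa.star_eq]
      _ = ⟪u, x⟫_ℂ := by rw [hQu]
    rw [inner_sub_right, this, sub_self]
  have := Submodule.eq_starProjection_of_mem_orthogonal (hran x) horth
  show Q x = U.starProjection x
  simp [this]

/-- Commutation: an operator leaving `U` and (via its adjoint) `U` invariant commutes
with the projection. -/
theorem prj_sa' (z w : H) : ⟪prj U hU z, w⟫_ℂ = ⟪z, prj U hU w⟫_ℂ := by
  conv_lhs => rw [← (prj_sa U hU).star_eq]
  rw [← inner_star_right]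

theorem prj_comm (B : H →L[ℂ] H) (hB : ∀ x ∈ U, B x ∈ U)
    (hB' : ∀ x ∈ U, (star B) x ∈ U) :
    ∀ x, B (prj U hU x) = prj U hU (B x) := by
  intro x
  apply ext_inner_right ℂ
  intro y
  have hm : (star B) (prj U hU y) ∈ U := hB' _ (prj_mem U hU y)
  have hm2 : B (prj U hU x) ∈ U := hB _ (prj_mem U hU x)
  calc ⟪B (prj U hU x), y⟫_ℂ
      = ⟪prj U hU (B (prj U hU x)), y⟫_ℂ := by rw [prj_eq_self U hU hm2]
    _ = ⟪B (prj U hU x), prj U hU y⟫_ℂ := by rw [prj_sa']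
    _ = ⟪prj U hU x, (star B) (prj U hU y)⟫_ℂ := by rw [inner_star_left]
    _ = ⟪x, prj U hU ((star B) (prj U hU y))⟫_ℂ := by rw [← prj_sa']
    _ = ⟪x, (star B) (prj U hU y)⟫_ℂ := by rw [prj_eq_self U hU hm]
    _ = ⟪B x, prj U hU y⟫_ℂ := by rw [inner_star_left]
    _ = ⟪prj U hU (B x), y⟫_ℂ := by rw [prj_sa']

end proj


section unit
variable (u : H →L[ℂ] H) (hu : u ∈ unitary (H →L[ℂ] H))
include hu

theorem u_star_apply (x : H) : (star u) (u x) = x := by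
  have h := (Unitary.mem_iff.1 hu).1
  calc (star u) (u x) = (star u * u) x := rfl
  _ = x := by rw [h]; rfl

theorem u_apply_star (x : H) : u ((star u) x) = x := by
  have h := (Unitary.mem_iff.1 hu).2
  calc u ((star u) x) = (u * star u) x := rfl
  _ = x := by rw [h]; rfl

theorem u_norm_apply (x : H) : ‖u x‖ = ‖x‖ := by
  have h : ⟪u x, u x⟫_ℂ = ⟪x, x⟫_ℂ := by
    rw [inner_star_left, u_star_apply u hu]
  rw [@norm_eq_sqrt_re_inner ℂ, @norm_eq_sqrt_re_inner ℂ, h]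

theorem u_comp_norm_le (w : H →L[ℂ] H) : ‖u ∘L w‖ ≤ ‖w‖ := by
  apply ContinuousLinearMap.opNorm_le_bound _ (norm_nonneg w)
  intro x
  calc ‖(u ∘L w) x‖ = ‖u (w x)‖ := rfl
  _ = ‖w x‖ := u_norm_apply u hu _
  _ ≤ ‖w‖ * ‖x‖ := w.le_opNorm x

def uEquiv : H ≃L[ℂ] H :=
  ContinuousLinearEquiv.equivOfInverse u (star u) (u_star_apply u hu) (u_apply_star u hu)

theorem u_image_closure (s : Set H) : u '' closure s = closure (u '' s) := by
  have := (uEquiv u hu).toHomeomorph.image_closure s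
  exact this

theorem star_mem_unitary : star u ∈ unitary (H →L[ℂ] H) := Unitary.star_mem hu

end unit


section sums

/-- Sum of squared norms of projections onto pairwise orthogonal closed subspaces. -/
theorem proj_sum (K : ℕ → Submodule ℂ H) (hK : ∀ n, IsClosed ((K n) : Set H))
    (horth : ∀ i j, i ≠ j → ∀ y ∈ K i, ∀ z ∈ K j, ⟪y, z⟫_ℂ = 0)
    (hdense : Dense (↑(⨆ n, K n) : Set H)) (η : H) :
    HasSum (fun n => prj (K n) (hK n) η) η := by
  set e : ℕ → H →L[ℂ] H := fun n => prj (K n) (hK n) with he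
  have hre : ∀ x : H, RCLike.re ⟪x, x⟫_ℂ = ‖x‖ ^ 2 := fun x => inner_self_eq_norm_sq x
  -- diagonal inner products
  have hdiag : ∀ n, ⟪e n η, η⟫_ℂ = ⟪e n η, e n η⟫_ℂ := by
    intro n
    have h0 : e n η = e n (e n η) := (congrFun (congrArg _ (prj_idem (K n) (hK n)).symm) η : _)
    calc ⟪e n η, η⟫_ℂ = ⟪e n (e n η), η⟫_ℂ := by rw [← h0]
    _ = ⟪e n η, e n η⟫_ℂ := by rw [prj_sa']
  -- pairwise orthogonality of the projected vectors
  have horthv : ∀ i j, i ≠ j → ⟪e i η, e j η⟫_ℂ = 0 := fun i j hij =>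
    horth i j hij _ (prj_mem _ _ η) _ (prj_mem _ _ η)
  -- partial sums bounded
  have hbdd : ∀ F : Finset ℕ, ∑ n ∈ F, ‖e n η‖ ^ 2 ≤ ‖η‖ ^ 2 := by
    intro F
    set sF := ∑ n ∈ F, e n η with hsF
    have hC : ⟪sF, sF⟫_ℂ = ∑ n ∈ F, ⟪e n η, e n η⟫_ℂ := by
      rw [hsF, sum_inner]
      refine Finset.sum_congr rfl fun i hi => ?_
      rw [inner_sum, Finset.sum_eq_single i]
      · intro j hj hne; exact horthv i j fun h => hne h.symm
      · intro h; exact absurd hi h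
    have hnr : ‖sF‖ ^ 2 = ∑ n ∈ F, ‖e n η‖ ^ 2 := by
      have := congrArg RCLike.re hC
      rw [hre] at this
      rw [this, map_sum]
      exact Finset.sum_congr rfl fun i _ => hre _
    have hinner : ⟪sF, η⟫_ℂ = ∑ n ∈ F, ⟪e n η, e n η⟫_ℂ := by
      rw [hsF, sum_inner]
      exact Finset.sum_congr rfl fun i _ => hdiag i
    have hrei : RCLike.re ⟪sF, η⟫_ℂ = ∑ n ∈ F, ‖e n η‖ ^ 2 := by
      rw [hinner, map_sum]
      exact Finset.sum_congr rfl fun i _ => hre _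
    have hcs : RCLike.re ⟪sF, η⟫_ℂ ≤ ‖sF‖ * ‖η‖ := by
      calc RCLike.re ⟪sF, η⟫_ℂ ≤ ‖⟪sF, η⟫_ℂ‖ := RCLike.re_le_norm _
      _ ≤ ‖sF‖ * ‖η‖ := norm_inner_le_norm _ _
    by_cases hz : ‖sF‖ = 0
    · rw [← hnr, hz]; nlinarith [norm_nonneg η]
    · have h1 : ‖sF‖ ^ 2 ≤ ‖sF‖ * ‖η‖ := by rw [hnr, ← hrei]; exact hcs
      have hpos : 0 < ‖sF‖ := lt_of_le_of_ne (norm_nonneg _) (Ne.symm hz)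
      have h2 : ‖sF‖ ≤ ‖η‖ := by nlinarith
      rw [← hnr]; nlinarith [norm_nonneg sF, norm_nonneg η]
  -- summability
  have hsq : Summable (fun n => ‖e n η‖ ^ 2) :=
    summable_of_sum_le (fun n => by positivity) hbdd
  have hOF : OrthogonalFamily ℂ (fun n => ↥(K n)) (fun n => (K n).subtypeₗᵢ) := by
    intro i j hij v w
    exact horth i j hij _ v.2 _ w.2
  haveI : ∀ n, CompleteSpace ↥(K n) := fun n => (hK n).completeSpace_coe
  have hsummable : Summable (fun n => e n η) := by
    have h0 : (fun n => e n η) = fun n => (K n).subtypeₗᵢ ⟨e n η, prj_mem _ _ η⟩ := by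
      funext n; rfl
    rw [h0]
    exact (hOF.summable_iff_norm_sq_summable _).2 (by simpa using hsq)
  set s := ∑' n, e n η with hs
  have hhs : HasSum (fun n => e n η) s := hsummable.hasSum
  -- identify s with η
  have hdiff : ∀ m, ∀ κ ∈ K m, ⟪κ, η - s⟫_ℂ = 0 := by
    intro m κ hκ
    have hinner : HasSum (fun n => ⟪κ, e n η⟫_ℂ) ⟪κ, s⟫_ℂ := hhs.mapL (innerSL ℂ κ)
    have hsingle : HasSum (fun n => ⟪κ, e n η⟫_ℂ) ⟪κ, e m η⟫_ℂ := by
      refine hasSum_single (f := fun n => ⟪κ, e n η⟫_ℂ) m ?_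
      intro n hn
      exact horth m n (fun h => hn h.symm) _ hκ _ (prj_mem _ _ η)
    have h1 : ⟪κ, s⟫_ℂ = ⟪κ, e m η⟫_ℂ := hinner.unique hsingle
    have h2 : η - e m η ∈ (K m)ᗮ := sub_prj_mem_orthogonal (K m) (hK m) η
    calc ⟪κ, η - s⟫_ℂ = ⟪κ, η⟫_ℂ - ⟪κ, s⟫_ℂ := by rw [inner_sub_right]
    _ = ⟪κ, η⟫_ℂ - ⟪κ, e m η⟫_ℂ := by rw [h1]
    _ = ⟪κ, η - e m η⟫_ℂ := by rw [inner_sub_right]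
    _ = 0 := h2 κ hκ
  have hzero : η - s = 0 := by
    have hperp : ∀ v : (⨆ n, K n : Submodule ℂ H), ⟪η - s, (v : H)⟫_ℂ = 0 := by
      rintro ⟨v, hv⟩
      have h3 : ⟪v, η - s⟫_ℂ = 0 := by
        refine Submodule.iSup_induction K (motive := fun x => ⟪x, η - s⟫_ℂ = 0) hv ?_ ?_ ?_
        · intro i x hx; exact hdiff i x hx
        · simp
        · intro x y hx hy; rw [inner_add_left, hx, hy, add_zero]
      have := congrArg (starRingEnd ℂ) h3
      rwa [inner_conj_symm, map_zero] at this
    exact hdense.eq_zero_of_inner_left (h := fun v hv => hperp ⟨v, hv⟩)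
  have h4 : s = η := (sub_eq_zero.1 hzero).symm
  rwa [h4] at hhs

end sums


theorem eq_of_dense_eqon {B1 B2 : H →L[ℂ] H} {s : Set H} (hd : Dense s)
    (h : ∀ x ∈ s, B1 x = B2 x) : B1 = B2 := by
  ext x
  have : Set.EqOn ⇑B1 ⇑B2 (closure s) :=
    Set.EqOn.closure (fun y hy => h y hy) B1.continuous B2.continuous
  exact this (by rw [hd.closure_eq]; trivial)

theorem perp_zero_of_dense {s : Set H} (hd : Dense s) {v : H}
    (h : ∀ x ∈ s, ⟪v, x⟫_ℂ = 0) : v = 0 := by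
  have : ∀ x ∈ closure s, ⟪v, x⟫_ℂ = 0 := by
    intro x hx
    have hc : Continuous fun w : H => ⟪v, w⟫_ℂ := continuous_const.inner continuous_id
    have : Set.EqOn (fun w : H => ⟪v, w⟫_ℂ) (fun _ => (0 : ℂ)) (closure s) :=
      Set.EqOn.closure (fun y hy => h y hy) hc continuous_const
    exact this hx
  have hv : ⟪v, v⟫_ℂ = 0 := this v (by rw [hd.closure_eq]; trivial)
  exact inner_self_eq_zero.1 hv

theorem prj_congr {U V : Submodule ℂ H} (h : U = V) (hU : IsClosed (U : Set H))
    (hV : IsClosed (V : Set H)) : prj U hU = prj V hV := by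
  subst h; rfl

theorem prj_apply_norm_le (U : Submodule ℂ H) (hU : IsClosed (U : Set H)) (x : H) :
    ‖prj U hU x‖ ≤ ‖x‖ := by
  have h1 : ⟪prj U hU x, x⟫_ℂ = ⟪prj U hU x, prj U hU x⟫_ℂ := by
    have h0 : prj U hU x = prj U hU (prj U hU x) :=
      (congrFun (congrArg _ (prj_idem U hU).symm) x : _)
    calc ⟪prj U hU x, x⟫_ℂ = ⟪prj U hU (prj U hU x), x⟫_ℂ := by rw [← h0]
    _ = ⟪prj U hU x, prj U hU x⟫_ℂ := by rw [prj_sa']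
  have h2 : ‖prj U hU x‖ ^ 2 = RCLike.re ⟪prj U hU x, x⟫_ℂ := by
    rw [h1, inner_self_eq_norm_sq]
  have h3 : RCLike.re ⟪prj U hU x, x⟫_ℂ ≤ ‖prj U hU x‖ * ‖x‖ :=
    le_trans (RCLike.re_le_norm _) (norm_inner_le_norm _ _)
  nlinarith [norm_nonneg (prj U hU x), norm_nonneg x]

section ctx

variable (P : VonNeumannAlgebra H) (ξ : H)

/-- `P ξ` as a submodule. -/
def SubP : Submodule ℂ H where
  carrier := {y : H | ∃ p ∈ P, p ξ = y}
  add_mem' := by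
    rintro a b ⟨p, hp, rfl⟩ ⟨q, hq, rfl⟩
    exact ⟨p + q, add_mem hp hq, rfl⟩
  zero_mem' := ⟨0, P.toSubalgebra.zero_mem, rfl⟩
  smul_mem' := by
    rintro c a ⟨p, hp, rfl⟩
    exact ⟨c • p, Subalgebra.smul_mem _ hp c, rfl⟩

theorem mem_SubP {y : H} : y ∈ SubP P ξ ↔ ∃ p ∈ P, p ξ = y := Iff.rfl

def Kcl : Submodule ℂ H := (SubP P ξ).topologicalClosure

theorem Kcl_closed : IsClosed ((Kcl P ξ : Submodule ℂ H) : Set H) :=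
  Submodule.isClosed_topologicalClosure _

theorem span_SubP : Submodule.span ℂ {y : H | ∃ p ∈ P, p ξ = y} = SubP P ξ :=
  Submodule.span_eq (SubP P ξ)

theorem projCl_eq_prj : projCl {y : H | ∃ p ∈ P, p ξ = y} = prj (Kcl P ξ) (Kcl_closed P ξ) := by
  have h : (Submodule.span ℂ {y : H | ∃ p ∈ P, p ξ = y}).topologicalClosure = Kcl P ξ := by
    rw [span_SubP]; rfl
  have h2 : projCl {y : H | ∃ p ∈ P, p ξ = y} =
      prj (Submodule.span ℂ {y : H | ∃ p ∈ P, p ξ = y}).topologicalClosure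
        (Submodule.isClosed_topologicalClosure _) := rfl
  rw [h2]
  exact prj_congr h _ _

theorem xi_mem_SubP : ξ ∈ SubP P ξ := ⟨1, one_mem P, by simp⟩

theorem xi_mem_Kcl : ξ ∈ Kcl P ξ := Submodule.le_topologicalClosure _ (xi_mem_SubP P ξ)

theorem SubP_mem_Kcl {y : H} (h : y ∈ SubP P ξ) : y ∈ Kcl P ξ :=
  Submodule.le_topologicalClosure _ h

/-- invariance of `Kcl` under an operator mapping `SubP` into `Kcl`. -/
theorem Kcl_invariant {B : H →L[ℂ] H} (hB : ∀ y ∈ SubP P ξ, B y ∈ Kcl P ξ) :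
    ∀ x ∈ Kcl P ξ, B x ∈ Kcl P ξ := by
  intro x hx
  have h1 : (SubP P ξ : Set H) ⊆ B ⁻¹' (Kcl P ξ : Set H) := fun y hy => hB y hy
  have h2 : closure (SubP P ξ : Set H) ⊆ B ⁻¹' (Kcl P ξ : Set H) :=
    closure_minimal h1 (IsClosed.preimage B.continuous (Kcl_closed P ξ))
  exact h2 hx

theorem Kcl_P_invariant {p : H →L[ℂ] H} (hp : p ∈ P) :
    ∀ x ∈ Kcl P ξ, p x ∈ Kcl P ξ := by
  apply Kcl_invariant
  rintro y ⟨q, hq, rfl⟩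
  exact SubP_mem_Kcl P ξ ⟨p * q, mul_mem hp hq, rfl⟩

/-- The projection `e` commutes with `P`. -/
theorem e_comm_P {p : H →L[ℂ] H} (hp : p ∈ P) (x : H) :
    p (prj (Kcl P ξ) (Kcl_closed P ξ) x) = prj (Kcl P ξ) (Kcl_closed P ξ) (p x) := by
  apply prj_comm
  · exact Kcl_P_invariant P ξ hp
  · exact Kcl_P_invariant P ξ (star_mem hp)

/-- choose approximating elements of `P` for a vector of `Kcl`. -/
theorem Kcl_seq {η : H} (hη : η ∈ Kcl P ξ) :
    ∃ g : ℕ → (H →L[ℂ] H), (∀ i, g i ∈ P) ∧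
      Filter.Tendsto (fun i => (g i) ξ) Filter.atTop (nhds η) := by
  have h : η ∈ closure (SubP P ξ : Set H) := hη
  rw [mem_closure_iff_seq_limit] at h
  obtain ⟨f, hf, hlim⟩ := h
  choose g hg hgf using hf
  refine ⟨g, hg, ?_⟩
  have : (fun i => (g i) ξ) = f := funext hgf
  rw [this]; exact hlim

end ctx


section ctxM

variable (M P : VonNeumannAlgebra H) (ξ : H)

theorem sep_of_dense_comm (hcyc' : Dense {y : H | ∃ x ∈ M.commutant, x ξ = y}) :
    ∀ m ∈ M, m ξ = 0 → m = 0 := by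
  intro m hm hmξ
  refine eq_of_dense_eqon hcyc' ?_
  rintro x ⟨m', hm', rfl⟩
  have hcm : m * m' = m' * m := VonNeumannAlgebra.mem_commutant_iff.mp hm' m hm
  calc m (m' ξ) = (m * m') ξ := rfl
  _ = (m' * m) ξ := by rw [hcm]
  _ = m' (m ξ) := rfl
  _ = m' 0 := by rw [hmξ]
  _ = 0 := map_zero m'
  _ = (0 : H →L[ℂ] H) (m' ξ) := rfl

theorem star_xi_norm (htrM : ∀ x ∈ M, ∀ y ∈ M, ⟪(x * y) ξ, ξ⟫_ℂ = ⟪(y * x) ξ, ξ⟫_ℂ) :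
    ∀ m, m ∈ M → ‖(star m) ξ‖ = ‖m ξ‖ := by
  intro m hm
  have h1 : ⟪(star m) ξ, (star m) ξ⟫_ℂ = ⟪(m * star m) ξ, ξ⟫_ℂ := by
    rw [ContinuousLinearMap.mul_apply, ← inner_star_left]
  have h2 : ⟪m ξ, m ξ⟫_ℂ = ⟪(star m * m) ξ, ξ⟫_ℂ := by
    have h3 := inner_star_left (star m) (m ξ) ξ
    rw [star_star] at h3
    rw [ContinuousLinearMap.mul_apply, h3]
  rw [@norm_eq_sqrt_re_inner ℂ, @norm_eq_sqrt_re_inner ℂ, h1, h2,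
    htrM m hm (star m) (star_mem hm)]

theorem star_seq_tendsto
    (htrM : ∀ x ∈ M, ∀ y ∈ M, ⟪(x * y) ξ, ξ⟫_ℂ = ⟪(y * x) ξ, ξ⟫_ℂ)
    (g : ℕ → (H →L[ℂ] H)) (hg : ∀ i, g i ∈ M) {η : H}
    (hlim : Filter.Tendsto (fun i => (g i) ξ) Filter.atTop (nhds η)) :
    ∃ β : H, Filter.Tendsto (fun i => (star (g i)) ξ) Filter.atTop (nhds β) := by
  have hiso : ∀ i j, dist ((star (g i)) ξ) ((star (g j)) ξ) = dist ((g i) ξ) ((g j) ξ) := by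
    intro i j
    have h1 : (star (g i)) ξ - (star (g j)) ξ = (star (g i - g j)) ξ := by
      rw [star_sub]; rfl
    have h2 : (g i) ξ - (g j) ξ = (g i - g j) ξ := rfl
    rw [dist_eq_norm, dist_eq_norm, h1, h2, star_xi_norm M ξ htrM _ (sub_mem (hg i) (hg j))]
  have hcau : CauchySeq (fun i => (g i) ξ) := hlim.cauchySeq
  have hcau2 : CauchySeq (fun i => (star (g i)) ξ) := by
    rw [Metric.cauchySeq_iff] at hcau ⊢
    intro ε hε
    obtain ⟨N, hN⟩ := hcau ε hε
    exact ⟨N, fun i hi j hj => by rw [hiso]; exact hN i hi j hj⟩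
  exact cauchySeq_tendsto_of_complete hcau2

theorem rho_exists
    (htrM : ∀ x ∈ M, ∀ y ∈ M, ⟪(x * y) ξ, ξ⟫_ℂ = ⟪(y * x) ξ, ξ⟫_ℂ)
    (hcyc : Dense {y : H | ∃ x ∈ M, x ξ = y})
    (q : H →L[ℂ] H) (hq : q ∈ M) :
    ∃ r : H →L[ℂ] H, (∀ m ∈ M, r (m ξ) = (m * star q) ξ) ∧
      (∀ m ∈ M, m * r = r * m) ∧
      (∀ m ∈ M, (star r) (m ξ) = (m * q) ξ) := by
  -- boundedness : ‖(m * star q) ξ‖ ≤ ‖q‖ * ‖m ξ‖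
  have hb : ∀ m, m ∈ M → ‖(m * star q) ξ‖ ≤ ‖q‖ * ‖m ξ‖ := by
    intro m hm
    have h1 : ‖(m * star q) ξ‖ = ‖(star (m * star q)) ξ‖ :=
      (star_xi_norm M ξ htrM _ (mul_mem hm (star_mem hq))).symm
    have h2 : (star (m * star q)) ξ = q ((star m) ξ) := by
      rw [star_mul, star_star]; rfl
    calc ‖(m * star q) ξ‖ = ‖q ((star m) ξ)‖ := by rw [h1, h2]
    _ ≤ ‖q‖ * ‖(star m) ξ‖ := q.le_opNorm _
    _ = ‖q‖ * ‖m ξ‖ := by rw [star_xi_norm M ξ htrM m hm]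
  -- the submodule M as a module, with evaluation maps
  let G := Subalgebra.toSubmodule M.toSubalgebra
  let L : G →ₗ[ℂ] H :=
    { toFun := fun m => (m : H →L[ℂ] H) ξ
      map_add' := fun a b => rfl
      map_smul' := fun c a => rfl }
  let R : G →ₗ[ℂ] H :=
    { toFun := fun m => ((m : H →L[ℂ] H) * star q) ξ
      map_add' := fun a b => by simp [add_mul]
      map_smul' := fun c a => by simp [smul_mul_assoc] }
  have hbb : ∀ g : G, ‖R g‖ ≤ ‖q‖ * ‖L g‖ := fun g => hb g g.2
  have hd : Dense (Set.range L : Set H) := by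
    have : {y : H | ∃ x ∈ M, x ξ = y} ⊆ Set.range L := by
      rintro y ⟨x, hx, rfl⟩; exact ⟨⟨x, hx⟩, rfl⟩
    exact hcyc.mono this
  obtain ⟨r, hr⟩ := ext_op L R (‖q‖) hbb hd
  have hchar : ∀ m ∈ M, r (m ξ) = (m * star q) ξ := by
    intro m hm; exact hr ⟨m, hm⟩
  refine ⟨r, hchar, ?_, ?_⟩
  · intro m hm
    refine eq_of_dense_eqon hcyc ?_
    rintro x ⟨m₂, hm₂, rfl⟩
    show m (r (m₂ ξ)) = r (m (m₂ ξ))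
    have h1 : m (m₂ ξ) = (m * m₂) ξ := rfl
    rw [h1, hchar m₂ hm₂, hchar (m * m₂) (mul_mem hm hm₂)]
    show m ((m₂ * star q) ξ) = (m * m₂ * star q) ξ
    rw [mul_assoc]; rfl
  · intro m hm
    have : ∀ m₂ ∈ M, ⟪(star r) (m ξ) - (m * q) ξ, m₂ ξ⟫_ℂ = 0 := by
      intro m₂ hm₂
      have h1 : ⟪(star r) (m ξ), m₂ ξ⟫_ℂ = ⟪m ξ, r (m₂ ξ)⟫_ℂ := by
        rw [inner_star_left, star_star]
      have h2 : ⟪m ξ, r (m₂ ξ)⟫_ℂ = ⟪(q * (star m₂ * m)) ξ, ξ⟫_ℂ := by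
        rw [hchar m₂ hm₂, inner_star_right, star_mul, star_star]
        have : (q * star m₂) (m ξ) = ((q * star m₂) * m) ξ := rfl
        rw [this, mul_assoc]
      have h3 : ⟪(q * (star m₂ * m)) ξ, ξ⟫_ℂ = ⟪((star m₂ * m) * q) ξ, ξ⟫_ℂ :=
        htrM q hq _ (mul_mem (star_mem hm₂) hm)
      have h4 : ⟪((star m₂ * m) * q) ξ, ξ⟫_ℂ = ⟪(m * q) ξ, m₂ ξ⟫_ℂ := by
        have h5 : ((star m₂ * m) * q) ξ = (star m₂) ((m * q) ξ) := by
          rw [mul_assoc]; rfl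
        rw [h5, inner_star_left, star_star]
      rw [inner_sub_left, h1, h2, h3, h4, sub_self]
    have hz := perp_zero_of_dense hcyc (v := (star r) (m ξ) - (m * q) ξ) ?_
    · exact sub_eq_zero.1 hz
    · rintro x ⟨m₂, hm₂, rfl⟩; exact this m₂ hm₂

end ctxM

section core

variable (M P : VonNeumannAlgebra H) (ξ : H)

/-- The Jones projection as a CLM. -/
def eP : H →L[ℂ] H := prj (Kcl P ξ) (Kcl_closed P ξ)

theorem eP_eq_projCl : projCl {y : H | ∃ p ∈ P, p ξ = y} = eP P ξ := projCl_eq_prj P ξ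

theorem eP_sa : IsSelfAdjoint (eP P ξ) := prj_sa _ _
theorem eP_sa' (z w : H) : ⟪eP P ξ z, w⟫_ℂ = ⟪z, eP P ξ w⟫_ℂ := prj_sa' _ _ z w
theorem eP_mem (z : H) : eP P ξ z ∈ Kcl P ξ := prj_mem _ _ z
theorem eP_eq_self {z : H} (h : z ∈ Kcl P ξ) : eP P ξ z = z := prj_eq_self _ _ h
theorem eP_xi : eP P ξ ξ = ξ := eP_eq_self P ξ (xi_mem_Kcl P ξ)
theorem eP_apply_p {p : H →L[ℂ] H} (hp : p ∈ P) : eP P ξ (p ξ) = p ξ :=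
  eP_eq_self P ξ (SubP_mem_Kcl P ξ ⟨p, hp, rfl⟩)
theorem eP_zero {z : H} (h : z ∈ (Kcl P ξ)ᗮ) : eP P ξ z = 0 := prj_eq_zero _ _ h
theorem eP_comm_P {p : H →L[ℂ] H} (hp : p ∈ P) (z : H) :
    p (eP P ξ z) = eP P ξ (p z) := e_comm_P P ξ hp z
theorem eP_comm_P' {p : H →L[ℂ] H} (hp : p ∈ P) : p * eP P ξ = eP P ξ * p := by
  ext z; exact eP_comm_P P ξ hp z

/-- extensionality for vectors of `Kcl` against `P ξ`. -/
theorem Kcl_ext {α β : H} (hα : α ∈ Kcl P ξ) (hβ : β ∈ Kcl P ξ)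
    (h : ∀ p ∈ P, ⟪α, p ξ⟫_ℂ = ⟪β, p ξ⟫_ℂ) : α = β := by
  have hδ : α - β ∈ Kcl P ξ := sub_mem hα hβ
  obtain ⟨g, hg, hlim⟩ := Kcl_seq P ξ hδ
  have hperp : ∀ i, ⟪α - β, (g i) ξ⟫_ℂ = 0 := by
    intro i
    rw [inner_sub_left, h _ (hg i), sub_self]
  have hsq : ⟪α - β, α - β⟫_ℂ = 0 := by
    have hcont : Filter.Tendsto (fun i => ⟪α - β, (g i) ξ⟫_ℂ) Filter.atTop
        (nhds ⟪α - β, α - β⟫_ℂ) := by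
      exact Filter.Tendsto.inner tendsto_const_nhds hlim
    have : (fun i => ⟪α - β, (g i) ξ⟫_ℂ) = fun _ => (0 : ℂ) := funext hperp
    rw [this] at hcont
    exact (tendsto_const_nhds_iff.1 hcont).symm
  exact sub_eq_zero.1 (inner_self_eq_zero.1 hsq)

variable (htrM : ∀ x ∈ M, ∀ y ∈ M, ⟪(x * y) ξ, ξ⟫_ℂ = ⟪(y * x) ξ, ξ⟫_ℂ)
  (hcyc : Dense {y : H | ∃ x ∈ M, x ξ = y})

/-- Right multiplication by `star q`. -/
def rho (q : H →L[ℂ] H) (hq : q ∈ M) : H →L[ℂ] H :=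
  (rho_exists M ξ htrM hcyc q hq).choose

theorem rho_char {q : H →L[ℂ] H} (hq : q ∈ M) {m : H →L[ℂ] H} (hm : m ∈ M) :
    rho M ξ htrM hcyc q hq (m ξ) = (m * star q) ξ :=
  (rho_exists M ξ htrM hcyc q hq).choose_spec.1 m hm

theorem rho_comm_M {q : H →L[ℂ] H} (hq : q ∈ M) {m : H →L[ℂ] H} (hm : m ∈ M) :
    m * rho M ξ htrM hcyc q hq = rho M ξ htrM hcyc q hq * m :=
  (rho_exists M ξ htrM hcyc q hq).choose_spec.2.1 m hm

theorem rho_star_char {q : H →L[ℂ] H} (hq : q ∈ M) {m : H →L[ℂ] H} (hm : m ∈ M) :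
    (star (rho M ξ htrM hcyc q hq)) (m ξ) = (m * q) ξ :=
  (rho_exists M ξ htrM hcyc q hq).choose_spec.2.2 m hm

theorem rho_xi {q : H →L[ℂ] H} (hq : q ∈ M) :
    rho M ξ htrM hcyc q hq ξ = (star q) ξ := by
  have := rho_char M ξ htrM hcyc hq (one_mem M)
  rwa [one_mul, ContinuousLinearMap.one_apply] at this

theorem rho_star_xi {q : H →L[ℂ] H} (hq : q ∈ M) :
    (star (rho M ξ htrM hcyc q hq)) ξ = q ξ := by
  have := rho_star_char M ξ htrM hcyc hq (one_mem M)
  rwa [one_mul, ContinuousLinearMap.one_apply] at this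

variable (hPM : ∀ x, x ∈ P → x ∈ M)

theorem rho_comm_e {q : H →L[ℂ] H} (hq : q ∈ P) (z : H) :
    rho M ξ htrM hcyc q (hPM q hq) (eP P ξ z) = eP P ξ (rho M ξ htrM hcyc q (hPM q hq) z) := by
  apply prj_comm
  · apply Kcl_invariant
    rintro w ⟨p, hp, rfl⟩
    rw [rho_char M ξ htrM hcyc _ (hPM p hp)]
    exact SubP_mem_Kcl P ξ ⟨p * star q, mul_mem hp (star_mem hq), rfl⟩
  · apply Kcl_invariant
    rintro w ⟨p, hp, rfl⟩
    rw [rho_star_char M ξ htrM hcyc _ (hPM p hp)]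
    exact SubP_mem_Kcl P ξ ⟨p * q, mul_mem hp hq, rfl⟩

theorem rho_comm_e' {q : H →L[ℂ] H} (hq : q ∈ P) :
    rho M ξ htrM hcyc q (hPM q hq) * eP P ξ = eP P ξ * rho M ξ htrM hcyc q (hPM q hq) := by
  ext z; exact rho_comm_e M P ξ htrM hcyc hPM hq z

theorem rho_mem_CMe {q : H →L[ℂ] H} (hq : q ∈ P) :
    rho M ξ htrM hcyc q (hPM q hq) ∈ Set.centralizer
      ((M : Set (H →L[ℂ] H)) ∪ {projCl {y : H | ∃ p ∈ P, p ξ = y}}) := by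
  rw [Set.mem_centralizer_iff]
  rintro g (hg | hg)
  · exact rho_comm_M M ξ htrM hcyc _ hg
  · rw [Set.mem_singleton_iff] at hg
    subst hg
    rw [eP_eq_projCl]
    exact (rho_comm_e' M P ξ htrM hcyc hPM hq).symm

include hPM in
theorem rho_mem_CP {q : H →L[ℂ] H} (hq : q ∈ M) :
    rho M ξ htrM hcyc q hq ∈ Set.centralizer (P : Set (H →L[ℂ] H)) := by
  rw [Set.mem_centralizer_iff]
  intro p hp
  exact rho_comm_M M ξ htrM hcyc _ (hPM p hp)

end core

section claim6

variable (M P : VonNeumannAlgebra H) (ξ : H)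
  (htrM : ∀ x ∈ M, ∀ y ∈ M, ⟪(x * y) ξ, ξ⟫_ℂ = ⟪(y * x) ξ, ξ⟫_ℂ)
  (hcyc : Dense {y : H | ∃ x ∈ M, x ξ = y})
  (hPM : ∀ x, x ∈ P → x ∈ M)

theorem star_mem_CP {y : H →L[ℂ] H} (hy : y ∈ Set.centralizer (P : Set (H →L[ℂ] H))) :
    star y ∈ Set.centralizer (P : Set (H →L[ℂ] H)) := by
  rw [Set.mem_centralizer_iff] at hy ⊢
  intro p hp
  have h := hy (star p) (star_mem hp)
  calc p * star y = star (y * star p) := by rw [star_mul, star_star]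
  _ = star (star p * y) := by rw [h]
  _ = star y * p := by rw [star_mul, star_star]

include htrM hcyc hPM in
theorem T_comm_corner
    (T : H →L[ℂ] H) (hT1 : eP P ξ * T = T) (hT2 : T * eP P ξ = T)
    (hTr : ∀ q (hq : q ∈ P), T * rho M ξ htrM hcyc q (hPM q hq) =
      rho M ξ htrM hcyc q (hPM q hq) * T)
    {y : H →L[ℂ] H} (hy : y ∈ Set.centralizer (P : Set (H →L[ℂ] H))) :
    T * (eP P ξ * y * eP P ξ) = (eP P ξ * y * eP P ξ) * T := by
  have hyc : ∀ p, p ∈ P → p * y = y * p := fun p hp => Set.mem_centralizer_iff.1 hy p hp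
  have hysc := star_mem_CP P hy
  have hysc' : ∀ p, p ∈ P → p * star y = star y * p :=
    fun p hp => Set.mem_centralizer_iff.1 hysc p hp
  have TmemK : ∀ z, T z ∈ Kcl P ξ := by
    intro z
    rw [← hT1]; exact eP_mem P ξ (T z)
  have Tzero : ∀ z ∈ (Kcl P ξ)ᗮ, T z = 0 := by
    intro z hz
    rw [← hT2]
    show T (eP P ξ z) = 0
    rw [eP_zero P ξ hz, map_zero]
  set η := eP P ξ (y ξ) with hη
  obtain ⟨g, hg, hlim⟩ := Kcl_seq P ξ (eP_mem P ξ (y ξ))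
  obtain ⟨β, hβlim⟩ := star_seq_tendsto M ξ htrM g (fun i => hPM _ (hg i)) hlim
  have hβK : β ∈ Kcl P ξ := by
    refine (Kcl_closed P ξ).mem_of_tendsto hβlim (Filter.Eventually.of_forall fun i => ?_)
    exact SubP_mem_Kcl P ξ ⟨star (g i), star_mem (hg i), rfl⟩
  -- identify β
  have hβ : β = eP P ξ ((star y) ξ) := by
    refine Kcl_ext P ξ hβK (eP_mem P ξ _) ?_
    intro p hp
    -- limit of the pairings
    have hlim1 : Filter.Tendsto (fun i => ⟪(star (g i)) ξ, p ξ⟫_ℂ) Filter.atTop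
        (nhds ⟪β, p ξ⟫_ℂ) := Filter.Tendsto.inner hβlim tendsto_const_nhds
    have hterm : ∀ i, ⟪(star (g i)) ξ, p ξ⟫_ℂ =
        ⟪ξ, rho M ξ htrM hcyc (star p) (hPM _ (star_mem hp)) ((g i) ξ)⟫_ℂ := by
      intro i
      have h1 : ⟪(star (g i)) ξ, p ξ⟫_ℂ = ⟪ξ, (g i) (p ξ)⟫_ℂ := by
        rw [inner_star_left, star_star]
      have h2 : rho M ξ htrM hcyc (star p) (hPM _ (star_mem hp)) ((g i) ξ) =
          (g i) (p ξ) := by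
        rw [rho_char M ξ htrM hcyc _ (hPM _ (hg i)), star_star]
        rfl
      rw [h1, h2]
    have hlim2 : Filter.Tendsto
        (fun i => ⟪ξ, rho M ξ htrM hcyc (star p) (hPM _ (star_mem hp)) ((g i) ξ)⟫_ℂ)
        Filter.atTop (nhds ⟪ξ, rho M ξ htrM hcyc (star p) (hPM _ (star_mem hp)) η⟫_ℂ) := by
      refine Filter.Tendsto.inner tendsto_const_nhds ?_
      exact ((rho M ξ htrM hcyc (star p) (hPM _ (star_mem hp))).continuous.tendsto η).comp hlim
    have heq : ⟪β, p ξ⟫_ℂ = ⟪ξ, rho M ξ htrM hcyc (star p) (hPM _ (star_mem hp)) η⟫_ℂ := by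
      refine tendsto_nhds_unique ?_ hlim2
      have : (fun i => ⟪(star (g i)) ξ, p ξ⟫_ℂ) =
          fun i => ⟪ξ, rho M ξ htrM hcyc (star p) (hPM _ (star_mem hp)) ((g i) ξ)⟫_ℂ :=
        funext hterm
      rw [← this]; exact hlim1
    rw [heq]
    -- compute the right-hand side
    have h3 : ⟪ξ, rho M ξ htrM hcyc (star p) (hPM _ (star_mem hp)) η⟫_ℂ =
        ⟪(star p) ξ, y ξ⟫_ℂ := by
      rw [hη, rho_comm_e M P ξ htrM hcyc hPM (star_mem hp), ← eP_sa', eP_xi,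
        inner_star_right, rho_star_xi]
    have h4 : ⟪eP P ξ ((star y) ξ), p ξ⟫_ℂ = ⟪(star p) ξ, y ξ⟫_ℂ := by
      rw [eP_sa', eP_apply_p P ξ hp]
      have h5 : ⟪(star y) ξ, p ξ⟫_ℂ = ⟪ξ, y (p ξ)⟫_ℂ := by
        rw [inner_star_left, star_star]
      have h6 : y (p ξ) = p (y ξ) := by
        have : (y * p) ξ = (p * y) ξ := by rw [hyc p hp]
        exact this.symm ▸ rfl
      rw [h5, h6, inner_star_right]
    rw [h3, ← h4]
  -- main computation at vectors q ξ
  have main : ∀ q, q ∈ P → (T * (eP P ξ * y * eP P ξ)) (q ξ) =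
      ((eP P ξ * y * eP P ξ) * T) (q ξ) := by
    intro q hq
    have hLv : (eP P ξ * y * eP P ξ) (q ξ) = q η := by
      show eP P ξ (y (eP P ξ (q ξ))) = q η
      rw [eP_apply_p P ξ hq]
      have h6 : y (q ξ) = q (y ξ) := by
        have : (y * q) ξ = (q * y) ξ := by rw [hyc q hq]
        exact this.symm ▸ rfl
      rw [h6, hη, ← eP_comm_P P ξ hq]
    have hLHS : (T * (eP P ξ * y * eP P ξ)) (q ξ) = T (q η) := by
      show T ((eP P ξ * y * eP P ξ) (q ξ)) = T (q η)
      rw [hLv]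
    have hRHS : ((eP P ξ * y * eP P ξ) * T) (q ξ) = eP P ξ (y (T (q ξ))) := by
      show eP P ξ (y (eP P ξ (T (q ξ)))) = eP P ξ (y (T (q ξ)))
      rw [eP_eq_self P ξ (TmemK _)]
    rw [hLHS, hRHS]
    -- identify T (q η) with eP (y (T (q ξ))) by pairing against P ξ
    refine Kcl_ext P ξ (TmemK _) (eP_mem P ξ _) ?_
    intro p hp
    -- step : T ∘ q on the approximations
    have step : ∀ i, T (q ((g i) ξ)) =
        rho M ξ htrM hcyc (star (g i)) (hPM _ (star_mem (hg i))) (T (q ξ)) := by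
      intro i
      have h7 : q ((g i) ξ) =
          rho M ξ htrM hcyc (star (g i)) (hPM _ (star_mem (hg i))) (q ξ) := by
        rw [rho_char M ξ htrM hcyc _ (hPM q hq), star_star]
        rfl
      rw [h7]
      have h8 := hTr (star (g i)) (star_mem (hg i))
      calc T (rho M ξ htrM hcyc (star (g i)) (hPM _ (star_mem (hg i))) (q ξ))
          = (T * rho M ξ htrM hcyc (star (g i)) (hPM _ (star_mem (hg i)))) (q ξ) := rfl
      _ = (rho M ξ htrM hcyc (star (g i)) (hPM _ (star_mem (hg i))) * T) (q ξ) := by rw [h8]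
      _ = rho M ξ htrM hcyc (star (g i)) (hPM _ (star_mem (hg i))) (T (q ξ)) := rfl
    -- limits
    have hlim3 : Filter.Tendsto (fun i => T (q ((g i) ξ))) Filter.atTop (nhds (T (q η))) :=
      ((T.continuous.comp q.continuous).tendsto η).comp hlim
    have hpair : ∀ i, ⟪T (q ((g i) ξ)), p ξ⟫_ℂ = ⟪T (q ξ), p ((star (g i)) ξ)⟫_ℂ := by
      intro i
      rw [step i, inner_star_left]
      congr 1
      have h9 : (star (rho M ξ htrM hcyc (star (g i)) (hPM _ (star_mem (hg i))))) (p ξ) =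
          (p * star (g i)) ξ := rho_star_char M ξ htrM hcyc _ (hPM p hp)
      rw [h9]
      rfl
    have hlim4 : Filter.Tendsto (fun i => ⟪T (q ((g i) ξ)), p ξ⟫_ℂ) Filter.atTop
        (nhds ⟪T (q η), p ξ⟫_ℂ) := Filter.Tendsto.inner hlim3 tendsto_const_nhds
    have hlim5 : Filter.Tendsto (fun i => ⟪T (q ξ), p ((star (g i)) ξ)⟫_ℂ) Filter.atTop
        (nhds ⟪T (q ξ), p β⟫_ℂ) :=
      Filter.Tendsto.inner tendsto_const_nhds ((p.continuous.tendsto β).comp hβlim)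
    have heq2 : ⟪T (q η), p ξ⟫_ℂ = ⟪T (q ξ), p β⟫_ℂ := by
      refine tendsto_nhds_unique ?_ hlim5
      have : (fun i => ⟪T (q ((g i) ξ)), p ξ⟫_ℂ) =
          fun i => ⟪T (q ξ), p ((star (g i)) ξ)⟫_ℂ := funext hpair
      rw [← this]; exact hlim4
    rw [heq2, hβ]
    -- simplify both sides
    have h10 : p (eP P ξ ((star y) ξ)) = eP P ξ (p ((star y) ξ)) := eP_comm_P P ξ hp _
    have h11 : ⟪T (q ξ), eP P ξ (p ((star y) ξ))⟫_ℂ = ⟪T (q ξ), p ((star y) ξ)⟫_ℂ := by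
      rw [← eP_sa', eP_eq_self P ξ (TmemK _)]
    have h12 : ⟪eP P ξ (y (T (q ξ))), p ξ⟫_ℂ = ⟪T (q ξ), p ((star y) ξ)⟫_ℂ := by
      rw [eP_sa', eP_apply_p P ξ hp, inner_star_left]
      congr 1
      have h13 : (star y) (p ξ) = p ((star y) ξ) := by
        have : (star y * p) ξ = (p * star y) ξ := by rw [hysc' p hp]
        exact this ▸ rfl
      rw [h13]
    rw [h10, h11, ← h12]
  -- conclude operator equality
  ext z
  have horthz : z - eP P ξ z ∈ (Kcl P ξ)ᗮ := sub_prj_mem_orthogonal _ _ z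
  have hAgreeK : ∀ w ∈ Kcl P ξ, (T * (eP P ξ * y * eP P ξ)) w =
      ((eP P ξ * y * eP P ξ) * T) w := by
    intro w hw
    have : Set.EqOn (⇑(T * (eP P ξ * y * eP P ξ))) (⇑((eP P ξ * y * eP P ξ) * T))
        (closure (SubP P ξ : Set H)) := by
      refine Set.EqOn.closure ?_ (T * (eP P ξ * y * eP P ξ)).continuous
        ((eP P ξ * y * eP P ξ) * T).continuous
      rintro w' ⟨q, hq, rfl⟩
      exact main q hq
    exact this hw
  have hAgreeO : ∀ w ∈ (Kcl P ξ)ᗮ, (T * (eP P ξ * y * eP P ξ)) w =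
      ((eP P ξ * y * eP P ξ) * T) w := by
    intro w hw
    have hL : (T * (eP P ξ * y * eP P ξ)) w = 0 := by
      show T (eP P ξ (y (eP P ξ w))) = 0
      rw [eP_zero P ξ hw, map_zero, map_zero, map_zero]
    have hR : ((eP P ξ * y * eP P ξ) * T) w = 0 := by
      show eP P ξ (y (eP P ξ (T w))) = 0
      rw [Tzero w hw, map_zero, map_zero, map_zero]
    rw [hL, hR]
  have h1 := hAgreeK _ (eP_mem P ξ z)
  have h2 := hAgreeO _ horthz
  calc (T * (eP P ξ * y * eP P ξ)) z
      = (T * (eP P ξ * y * eP P ξ)) (eP P ξ z + (z - eP P ξ z)) := by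
        congr 1; abel
  _ = (T * (eP P ξ * y * eP P ξ)) (eP P ξ z) +
        (T * (eP P ξ * y * eP P ξ)) (z - eP P ξ z) := map_add _ _ _
  _ = ((eP P ξ * y * eP P ξ) * T) (eP P ξ z) +
        ((eP P ξ * y * eP P ξ) * T) (z - eP P ξ z) := by rw [h1, h2]
  _ = ((eP P ξ * y * eP P ξ) * T) (eP P ξ z + (z - eP P ξ z)) := (map_add _ _ _).symm
  _ = ((eP P ξ * y * eP P ξ) * T) z := by congr 1; abel

end claim6

section claim7

variable (P : VonNeumannAlgebra H) (ξ : H)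

theorem T_xi_bound
    (T : H →L[ℂ] H) (hT1 : eP P ξ * T = T) (hT2 : T * eP P ξ = T)
    (hTy : ∀ y' ∈ Set.centralizer (P : Set (H →L[ℂ] H)),
      T * (eP P ξ * y' * eP P ξ) = (eP P ξ * y' * eP P ξ) * T)
    {y : H →L[ℂ] H} (hy : y ∈ Set.centralizer (P : Set (H →L[ℂ] H))) :
    ‖y (T ξ)‖ ≤ ‖T‖ * ‖y ξ‖ := by
  set Y := y * eP P ξ with hY
  set d := star Y * Y with hd
  set c := star T * T with hc
  have hssa : star (eP P ξ) = eP P ξ := (eP_sa P ξ).star_eq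
  have hd_eq : d = eP P ξ * (star y * y) * eP P ξ := by
    rw [hd, hY, star_mul (y : H →L[ℂ] H) (eP P ξ), hssa]
    simp only [mul_assoc]
  have hyy : star y * y ∈ Set.centralizer (P : Set (H →L[ℂ] H)) :=
    Set.mul_mem_centralizer (star_mem_CP P hy) hy
  have hTd : T * d = d * T := by rw [hd_eq]; exact hTy _ hyy
  have hdsa : star d = d := by rw [hd, star_mul, star_star]
  have hcsa : star c = c := by rw [hc, star_mul, star_star]
  have hTd' : star T * d = d * star T := by
    have h := congrArg star hTd
    rw [star_mul T d, star_mul d T, hdsa] at h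
    exact h.symm
  have hcd : Commute c d := by
    show c * d = d * c
    rw [hc, mul_assoc, hTd, ← mul_assoc, hTd', mul_assoc]
  have hcpow : ∀ a : ℕ, c ^ a * d = d * c ^ a := fun a => (Commute.pow_left hcd a).eq
  have hcapsa : ∀ a : ℕ, star (c ^ a) = c ^ a := by
    intro a; rw [star_pow, hcsa]
  -- identity (I2)
  have I2 : ∀ a : ℕ, ‖Y ((c ^ a) ξ)‖ ^ 2 = RCLike.re ⟪(d * c ^ (2 * a)) ξ, ξ⟫_ℂ := by
    intro a
    have h1 : ⟪Y ((c ^ a) ξ), Y ((c ^ a) ξ)⟫_ℂ = ⟪(c ^ a) ξ, d ((c ^ a) ξ)⟫_ℂ := by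
      rw [inner_star_left]; rfl
    have h2 : ⟪(c ^ a) ξ, d ((c ^ a) ξ)⟫_ℂ = ⟪ξ, (c ^ a * (d * c ^ a)) ξ⟫_ℂ := by
      rw [inner_star_left (c ^ a) ξ, hcapsa]
      rfl
    have h3 : c ^ a * (d * c ^ a) = d * c ^ (2 * a) := by
      rw [← mul_assoc, hcpow a, mul_assoc, ← pow_add, two_mul]
    have h4 : RCLike.re ⟪ξ, (d * c ^ (2 * a)) ξ⟫_ℂ = RCLike.re ⟪(d * c ^ (2 * a)) ξ, ξ⟫_ℂ := by
      rw [← inner_conj_symm]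
      exact RCLike.conj_re _
    rw [← inner_self_eq_norm_sq (𝕜 := ℂ), h1, h2, h3, h4]
  -- identity (I1)
  have I1 : ∀ a : ℕ, ⟪(d * c ^ a) ξ, ξ⟫_ℂ = ⟪Y ((c ^ a) ξ), Y ξ⟫_ℂ := by
    intro a
    have h1 : (d * c ^ a) ξ = star Y (Y ((c ^ a) ξ)) := rfl
    rw [h1, inner_star_left, star_star]
  set Q := ‖Y (T ξ)‖ ^ 2 with hQdef
  set D := ‖Y ξ‖ ^ 2 with hDdef
  set b : ℕ → ℝ := fun n => RCLike.re ⟪(d * c ^ (2 ^ n)) ξ, ξ⟫_ℂ with hbdef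
  have hb_succ : ∀ n, b (n + 1) = ‖Y ((c ^ (2 ^ n)) ξ)‖ ^ 2 := by
    intro n
    rw [hbdef]
    show RCLike.re ⟪(d * c ^ 2 ^ (n+1)) ξ, ξ⟫_ℂ = _
    rw [I2 (2 ^ n), pow_succ, mul_comm (2^n) 2]
  have hb0 : b 0 = Q := by
    have h1 : ⟪Y (T ξ), Y (T ξ)⟫_ℂ = ⟪T ξ, d (T ξ)⟫_ℂ := by
      rw [inner_star_left]; rfl
    have h2 : ⟪T ξ, d (T ξ)⟫_ℂ = ⟪ξ, (star T * (d * T)) ξ⟫_ℂ := by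
      rw [inner_star_left T ξ]
      rfl
    have h3 : star T * (d * T) = d * c := by
      rw [← mul_assoc, hTd', mul_assoc, hc]
    have h4 : RCLike.re ⟪ξ, (d * c) ξ⟫_ℂ = RCLike.re ⟪(d * c) ξ, ξ⟫_ℂ := by
      rw [← inner_conj_symm]; exact RCLike.conj_re _
    rw [hbdef]
    show RCLike.re ⟪(d * c ^ 2 ^ 0) ξ, ξ⟫_ℂ = Q
    rw [pow_zero, pow_one, ← h4, ← h3, ← h2, ← h1, hQdef, inner_self_eq_norm_sq (𝕜 := ℂ)]
  have hbnn : ∀ n, 0 ≤ b n := by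
    intro n
    cases n with
    | zero => rw [hb0]; positivity
    | succ k => rw [hb_succ k]; positivity
  have hCS : ∀ n, b n ^ 2 ≤ b (n + 1) * D := by
    intro n
    have h1 : b n = RCLike.re ⟪Y ((c ^ (2 ^ n)) ξ), Y ξ⟫_ℂ := by
      rw [hbdef]; exact congrArg _ (I1 (2 ^ n))
    have h2 : |b n| ≤ ‖Y ((c ^ (2 ^ n)) ξ)‖ * ‖Y ξ‖ := by
      rw [h1]
      calc |RCLike.re ⟪Y ((c ^ (2 ^ n)) ξ), Y ξ⟫_ℂ| ≤ ‖⟪Y ((c ^ (2 ^ n)) ξ), Y ξ⟫_ℂ‖ :=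
        RCLike.abs_re_le_norm _
      _ ≤ ‖Y ((c ^ (2 ^ n)) ξ)‖ * ‖Y ξ‖ := norm_inner_le_norm _ _
    have h3 : b n ^ 2 ≤ (‖Y ((c ^ (2 ^ n)) ξ)‖ * ‖Y ξ‖) ^ 2 := by
      rw [← sq_abs]
      exact pow_le_pow_left₀ (abs_nonneg _) h2 2
    calc b n ^ 2 ≤ (‖Y ((c ^ (2 ^ n)) ξ)‖ * ‖Y ξ‖) ^ 2 := h3
    _ = ‖Y ((c ^ (2 ^ n)) ξ)‖ ^ 2 * ‖Y ξ‖ ^ 2 := by ring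
    _ = b (n + 1) * D := by rw [hb_succ n, hDdef]
  have hbnd : ∀ n, b n ≤ ‖d‖ * ‖c‖ ^ (2 ^ n) * ‖ξ‖ ^ 2 := by
    intro n
    have h1 : b n ≤ |b n| := le_abs_self _
    have h2 : |b n| ≤ ‖(d * c ^ (2 ^ n)) ξ‖ * ‖ξ‖ := by
      calc |b n| ≤ ‖⟪(d * c ^ (2 ^ n)) ξ, ξ⟫_ℂ‖ := RCLike.abs_re_le_norm _
      _ ≤ ‖(d * c ^ (2 ^ n)) ξ‖ * ‖ξ‖ := norm_inner_le_norm _ _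
    have h3 : ‖(d * c ^ (2 ^ n)) ξ‖ ≤ ‖d‖ * ‖c‖ ^ (2 ^ n) * ‖ξ‖ := by
      calc ‖(d * c ^ (2 ^ n)) ξ‖ ≤ ‖d * c ^ (2 ^ n)‖ * ‖ξ‖ :=
        ContinuousLinearMap.le_opNorm _ _
      _ ≤ ‖d‖ * ‖c ^ (2 ^ n)‖ * ‖ξ‖ := by
          have := norm_mul_le d (c ^ (2 ^ n))
          exact mul_le_mul_of_nonneg_right this (norm_nonneg ξ)
      _ ≤ ‖d‖ * ‖c‖ ^ (2 ^ n) * ‖ξ‖ := by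
          have h4 : ‖c ^ (2 ^ n)‖ ≤ ‖c‖ ^ (2 ^ n) :=
            norm_pow_le' c (Nat.pow_pos (by norm_num))
          have h5 := mul_le_mul_of_nonneg_left h4 (norm_nonneg d)
          exact mul_le_mul_of_nonneg_right h5 (norm_nonneg ξ)
    calc b n ≤ |b n| := h1
    _ ≤ ‖(d * c ^ (2 ^ n)) ξ‖ * ‖ξ‖ := h2
    _ ≤ ‖d‖ * ‖c‖ ^ (2 ^ n) * ‖ξ‖ * ‖ξ‖ := mul_le_mul_of_nonneg_right h3 (norm_nonneg ξ)
    _ = ‖d‖ * ‖c‖ ^ (2 ^ n) * ‖ξ‖ ^ 2 := by ring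
  have hQnn : 0 ≤ Q := by rw [hQdef]; positivity
  have hDnn : 0 ≤ D := by rw [hDdef]; positivity
  have hQn : ∀ n, Q ^ (2 ^ n) ≤ D ^ (2 ^ n - 1) * b n := by
    intro n
    induction n with
    | zero => simpa using hb0.ge
    | succ k ih =>
      have h1 : Q ^ (2 ^ (k+1)) = (Q ^ (2 ^ k)) ^ 2 := by
        rw [pow_succ]
        exact pow_mul Q (2 ^ k) 2
      have h2 : (Q ^ (2 ^ k)) ^ 2 ≤ (D ^ (2 ^ k - 1) * b k) ^ 2 :=
        pow_le_pow_left₀ (by positivity) ih 2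
      have h3 : (D ^ (2 ^ k - 1) * b k) ^ 2 = D ^ (2 * (2 ^ k - 1)) * b k ^ 2 := by
        rw [mul_pow, ← pow_mul, mul_comm (2 ^ k - 1) 2]
      have h4 : D ^ (2 * (2 ^ k - 1)) * b k ^ 2 ≤ D ^ (2 * (2 ^ k - 1)) * (b (k+1) * D) :=
        mul_le_mul_of_nonneg_left (hCS k) (by positivity)
      have h5 : D ^ (2 * (2 ^ k - 1)) * (b (k+1) * D) = D ^ (2 ^ (k+1) - 1) * b (k+1) := by
        have he : 2 * (2 ^ k - 1) + 1 = 2 ^ (k+1) - 1 := by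
          have h2k : 1 ≤ 2 ^ k := Nat.one_le_two_pow
          omega
        rw [← he, pow_add, pow_one]; ring
      calc Q ^ (2 ^ (k+1)) = (Q ^ (2 ^ k)) ^ 2 := h1
      _ ≤ (D ^ (2 ^ k - 1) * b k) ^ 2 := h2
      _ = D ^ (2 * (2 ^ k - 1)) * b k ^ 2 := h3
      _ ≤ D ^ (2 * (2 ^ k - 1)) * (b (k+1) * D) := h4
      _ = D ^ (2 ^ (k+1) - 1) * b (k+1) := h5
  -- conclude Q ≤ ‖c‖ * D
  have hQled : Q ≤ ‖c‖ * D := by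
    by_contra hcon
    push_neg at hcon
    have hQpos : 0 < Q := lt_of_le_of_lt (by positivity) hcon
    by_cases hD0 : D = 0
    · have h1 := hQn 1
      have h2 : D ^ (2 ^ 1 - 1) = 0 := by rw [hD0]; norm_num
      rw [h2, zero_mul] at h1
      have : Q ^ 2 ≤ 0 := by simpa using h1
      have : Q = 0 := by nlinarith
      exact absurd this (ne_of_gt hQpos)
    · have hDpos : 0 < D := lt_of_le_of_ne hDnn (Ne.symm hD0)
      by_cases hc0 : ‖c‖ = 0
      · have : c = 0 := norm_eq_zero.1 hc0
        have h1 : b 0 = 0 := by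
          rw [hbdef]
          show RCLike.re ⟪(d * c ^ 2 ^ 0) ξ, ξ⟫_ℂ = 0
          rw [this]
          simp
        rw [hb0] at h1
        rw [hc0, zero_mul] at hcon
        rw [h1] at hQpos
        exact absurd hQpos (lt_irrefl 0)
      · have hcpos : 0 < ‖c‖ := lt_of_le_of_ne (norm_nonneg c) (Ne.symm hc0)
        set A := ‖c‖ * D with hA
        have hApos : 0 < A := mul_pos hcpos hDpos
        set r := Q / A with hr
        have hr1 : 1 < r := (one_lt_div hApos).2 hcon
        set Cb := ‖d‖ * ‖ξ‖ ^ 2 with hCb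
        have hCbnn : 0 ≤ Cb := by rw [hCb]; positivity
        obtain ⟨k, hk⟩ := pow_unbounded_of_one_lt (Cb / D) hr1
        have hk2 : Cb / D < r ^ (2 ^ k) :=
          lt_of_lt_of_le hk (pow_le_pow_right₀ hr1.le (Nat.lt_two_pow_self).le)
        set m := 2 ^ k with hm
        have hm1 : 1 ≤ m := Nat.one_le_two_pow
        -- from hk2 : Cb * A^m < r^m * A^m * D ... derive contradiction with hQn, hbnd
        have hQm : Q ^ m = r ^ m * A ^ m := by
          rw [hr, div_pow, div_mul_cancel₀]
          exact pow_ne_zero m (ne_of_gt hApos)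
        have hAm : A ^ m = ‖c‖ ^ m * D ^ m := mul_pow _ _ _
        have hDm : D ^ m = D ^ (m - 1) * D := by
          have hmm : m - 1 + 1 = m := by omega
          calc D ^ m = D ^ (m - 1 + 1) := by rw [hmm]
          _ = D ^ (m - 1) * D := pow_succ D (m - 1)
        have hgt : Q ^ m > Cb / D * A ^ m := by
          rw [hQm]
          exact mul_lt_mul_of_pos_right hk2 (pow_pos hApos m)
        have heq : Cb / D * A ^ m = Cb * (‖c‖ ^ m * D ^ (m - 1)) := by
          rw [hAm, hDm]
          field_simp
        have hle : Q ^ m ≤ D ^ (m - 1) * (‖d‖ * ‖c‖ ^ m * ‖ξ‖ ^ 2) := by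
          calc Q ^ m ≤ D ^ (m - 1) * b k := hQn k
          _ ≤ D ^ (m - 1) * (‖d‖ * ‖c‖ ^ m * ‖ξ‖ ^ 2) :=
            mul_le_mul_of_nonneg_left (hbnd k) (by positivity)
        have : Cb * (‖c‖ ^ m * D ^ (m - 1)) = D ^ (m - 1) * (‖d‖ * ‖c‖ ^ m * ‖ξ‖ ^ 2) := by
          rw [hCb]; ring
        rw [heq, this] at hgt
        exact absurd hle (not_le.2 hgt)
  -- conclude : ‖y (T ξ)‖ ≤ ‖T‖ * ‖y ξ‖
  have hYT : Y (T ξ) = y (T ξ) := by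
    show y (eP P ξ (T ξ)) = y (T ξ)
    have : eP P ξ (T ξ) = T ξ := by
      have := congrFun (congrArg (fun (B : H →L[ℂ] H) => ⇑B) hT1) ξ
      exact this
    rw [this]
  have hYξ : Y ξ = y ξ := by
    show y (eP P ξ ξ) = y ξ
    rw [eP_xi]
  have hcT : ‖c‖ ≤ ‖T‖ ^ 2 := by
    calc ‖c‖ = ‖star T * T‖ := rfl
    _ ≤ ‖star T‖ * ‖T‖ := norm_mul_le _ _
    _ = ‖T‖ * ‖T‖ := by rw [norm_star]
    _ = ‖T‖ ^ 2 := by ring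
  have hfin : ‖y (T ξ)‖ ^ 2 ≤ (‖T‖ * ‖y ξ‖) ^ 2 := by
    calc ‖y (T ξ)‖ ^ 2 = Q := by rw [hQdef, hYT]
    _ ≤ ‖c‖ * D := hQled
    _ ≤ ‖T‖ ^ 2 * D := mul_le_mul_of_nonneg_right hcT hDnn
    _ = (‖T‖ * ‖y ξ‖) ^ 2 := by rw [hDdef, hYξ]; ring
  have h1 : (0:ℝ) ≤ ‖y (T ξ)‖ := norm_nonneg _
  have h2 : (0:ℝ) ≤ ‖T‖ * ‖y ξ‖ := by positivity
  nlinarith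

end claim7

section claim8

variable (M P : VonNeumannAlgebra H) (ξ : H)
  (htrM : ∀ x ∈ M, ∀ y ∈ M, ⟪(x * y) ξ, ξ⟫_ℂ = ⟪(y * x) ξ, ξ⟫_ℂ)
  (hcyc : Dense {y : H | ∃ x ∈ M, x ξ = y})
  (hPM : ∀ x, x ∈ P → x ∈ M)

theorem star_mem_centralizer_of {S : Set (H →L[ℂ] H)} (hS : ∀ s ∈ S, star s ∈ S)
    {y : H →L[ℂ] H} (hy : y ∈ Set.centralizer S) : star y ∈ Set.centralizer S := by
  rw [Set.mem_centralizer_iff] at hy ⊢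
  intro p hp
  have h := hy (star p) (hS p hp)
  calc p * star y = star (y * star p) := by rw [star_mul, star_star]
  _ = star (star p * y) := by rw [h]
  _ = star y * p := by rw [star_mul, star_star]

include htrM hcyc hPM in
theorem T_factor
    (hcyc' : Dense {y : H | ∃ x ∈ M.commutant, x ξ = y})
    (T : H →L[ℂ] H) (hT1 : eP P ξ * T = T) (hT2 : T * eP P ξ = T)
    (hTr : ∀ q (hq : q ∈ P), T * rho M ξ htrM hcyc q (hPM q hq) =
      rho M ξ htrM hcyc q (hPM q hq) * T) :
    ∃ a : H →L[ℂ] H, a ∈ P ∧ a * eP P ξ = T ∧ a ξ = T ξ := by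
  have hTy : ∀ y' ∈ Set.centralizer (P : Set (H →L[ℂ] H)),
      T * (eP P ξ * y' * eP P ξ) = (eP P ξ * y' * eP P ξ) * T :=
    fun y' hy' => T_comm_corner M P ξ htrM hcyc hPM T hT1 hT2 hTr hy'
  have hbd : ∀ y ∈ Set.centralizer (P : Set (H →L[ℂ] H)), ‖y (T ξ)‖ ≤ ‖T‖ * ‖y ξ‖ :=
    fun y hy => T_xi_bound P ξ T hT1 hT2 hTy hy
  -- the centralizer of P as a submodule of operators
  let Pc : Submodule ℂ (H →L[ℂ] H) :=
    { carrier := Set.centralizer (P : Set (H →L[ℂ] H))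
      add_mem' := by
        intro a b ha hb
        rw [Set.mem_centralizer_iff] at ha hb ⊢
        intro p hp
        rw [mul_add, add_mul, ha p hp, hb p hp]
      zero_mem' := by
        rw [Set.mem_centralizer_iff]
        intro p hp; rw [mul_zero, zero_mul]
      smul_mem' := by
        intro c a ha
        rw [Set.mem_centralizer_iff] at ha ⊢
        intro p hp
        rw [mul_smul_comm, smul_mul_assoc, ha p hp] }
  let L : Pc →ₗ[ℂ] H :=
    { toFun := fun y => (y : H →L[ℂ] H) ξ
      map_add' := fun a b => rfl
      map_smul' := fun c a => rfl }
  let R : Pc →ₗ[ℂ] H :=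
    { toFun := fun y => (y : H →L[ℂ] H) (T ξ)
      map_add' := fun a b => rfl
      map_smul' := fun c a => rfl }
  have hbb : ∀ g : Pc, ‖R g‖ ≤ ‖T‖ * ‖L g‖ := fun g => hbd g g.2
  have hd : Dense (Set.range L : Set H) := by
    have hsub : {y : H | ∃ x ∈ M.commutant, x ξ = y} ⊆ Set.range L := by
      rintro y ⟨m', hm', rfl⟩
      have hmem : m' ∈ Set.centralizer (P : Set (H →L[ℂ] H)) := by
        rw [Set.mem_centralizer_iff]
        intro p hp
        exact VonNeumannAlgebra.mem_commutant_iff.mp hm' p (hPM p hp)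
      exact ⟨⟨m', hmem⟩, rfl⟩
    exact hcyc'.mono hsub
  obtain ⟨A, hA⟩ := ext_op L R (‖T‖) hbb hd
  have hAy : ∀ y (hy : y ∈ Set.centralizer (P : Set (H →L[ℂ] H))),
      A (y ξ) = y (T ξ) := fun y hy => hA ⟨y, hy⟩
  -- A is in the double centralizer of P, hence in P
  have hAP : A ∈ P := by
    have hmem : A ∈ Set.centralizer (Set.centralizer (P : Set (H →L[ℂ] H))) := by
      rw [Set.mem_centralizer_iff]
      intro y hy
      refine eq_of_dense_eqon hd ?_
      rintro z ⟨g, rfl⟩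
      show y (A (L g)) = A (y (L g))
      have h1 : y ((g : H →L[ℂ] H) ξ) = (y * (g : H →L[ℂ] H)) ξ := rfl
      have h2 : A (L g) = (g : H →L[ℂ] H) (T ξ) := hA g
      have hyg : y * (g : H →L[ℂ] H) ∈ Set.centralizer (P : Set (H →L[ℂ] H)) :=
        Set.mul_mem_centralizer hy g.2
      calc y (A (L g)) = y ((g : H →L[ℂ] H) (T ξ)) := by rw [h2]
      _ = (y * (g : H →L[ℂ] H)) (T ξ) := rfl
      _ = A ((y * (g : H →L[ℂ] H)) ξ) := (hAy _ hyg).symm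
      _ = A (y (L g)) := rfl
    have hPP : Set.centralizer (Set.centralizer (P : Set (H →L[ℂ] H))) =
        (P : Set (H →L[ℂ] H)) := P.centralizer_centralizer'
    rw [hPP] at hmem
    exact hmem
  -- A ∘ e = T
  have hAe : A * eP P ξ = T := by
    ext z
    have hAgree : ∀ w ∈ closure (SubP P ξ : Set H), (A * eP P ξ) w = T w := by
      intro w hw
      have : Set.EqOn (⇑(A * eP P ξ)) (⇑T) (closure (SubP P ξ : Set H)) := by
        refine Set.EqOn.closure ?_ (A * eP P ξ).continuous T.continuous
        rintro w' ⟨p, hp, rfl⟩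
        show A (eP P ξ (p ξ)) = T (p ξ)
        rw [eP_apply_p P ξ hp]
        have hrsp := rho_mem_CP M P ξ htrM hcyc hPM (hPM _ (star_mem hp))
        have hrxi : rho M ξ htrM hcyc (star p) (hPM _ (star_mem hp)) ξ = p ξ := by
          rw [rho_xi, star_star]
        calc A (p ξ) = A (rho M ξ htrM hcyc (star p) (hPM _ (star_mem hp)) ξ) := by rw [hrxi]
        _ = rho M ξ htrM hcyc (star p) (hPM _ (star_mem hp)) (T ξ) := hAy _ hrsp
        _ = (rho M ξ htrM hcyc (star p) (hPM _ (star_mem hp)) * T) ξ := rfl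
        _ = (T * rho M ξ htrM hcyc (star p) (hPM _ (star_mem hp))) ξ := by
            rw [hTr (star p) (star_mem hp)]
        _ = T (rho M ξ htrM hcyc (star p) (hPM _ (star_mem hp)) ξ) := rfl
        _ = T (p ξ) := by rw [hrxi]
      exact this hw
    have horthz : z - eP P ξ z ∈ (Kcl P ξ)ᗮ := sub_prj_mem_orthogonal _ _ z
    have hO : ∀ w ∈ (Kcl P ξ)ᗮ, (A * eP P ξ) w = T w := by
      intro w hw
      have h1 : (A * eP P ξ) w = 0 := by
        show A (eP P ξ w) = 0
        rw [eP_zero P ξ hw, map_zero]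
      have h2 : T w = 0 := by
        rw [← hT2]
        show T (eP P ξ w) = 0
        rw [eP_zero P ξ hw, map_zero]
      rw [h1, h2]
    have h1 := hAgree _ (eP_mem P ξ z)
    have h2 := hO _ horthz
    calc (A * eP P ξ) z = (A * eP P ξ) (eP P ξ z + (z - eP P ξ z)) := by congr 1; abel
    _ = (A * eP P ξ) (eP P ξ z) + (A * eP P ξ) (z - eP P ξ z) := map_add _ _ _
    _ = T (eP P ξ z) + T (z - eP P ξ z) := by rw [h1, h2]
    _ = T (eP P ξ z + (z - eP P ξ z)) := (map_add _ _ _).symm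
    _ = T z := by congr 1; abel
  refine ⟨A, hAP, hAe, ?_⟩
  have := congrFun (congrArg (fun (B : H →L[ℂ] H) => ⇑B) hAe) ξ
  simpa [eP_xi] using this

end claim8

section subsplemmas

variable (P : VonNeumannAlgebra H) (ξ : H)

theorem subsp_closed (w : H →L[ℂ] H) : IsClosed ((subsp P ξ w : Submodule ℂ H) : Set H) :=
  Submodule.isClosed_topologicalClosure _

theorem subsp_carrier {g : H →L[ℂ] H} (hg : g ∈ unitary (H →L[ℂ] H)) :
    ((subsp P ξ g : Submodule ℂ H) : Set H) = g '' ((Kcl P ξ : Submodule ℂ H) : Set H) := by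
  have hset : {y : H | ∃ p ∈ P, (g * p) ξ = y} = g '' ((SubP P ξ : Submodule ℂ H) : Set H) := by
    ext y
    constructor
    · rintro ⟨p, hp, rfl⟩
      exact ⟨p ξ, ⟨p, hp, rfl⟩, rfl⟩
    · rintro ⟨z, ⟨p, hp, rfl⟩, rfl⟩
      exact ⟨p, hp, rfl⟩
  have hspan : Submodule.span ℂ {y : H | ∃ p ∈ P, (g * p) ξ = y} =
      Submodule.map (g : H →ₗ[ℂ] H) (SubP P ξ) := by
    rw [hset]
    conv_rhs => rw [← Submodule.span_eq (SubP P ξ)]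
    exact Submodule.span_image (g : H →ₗ[ℂ] H)
  show ((Submodule.span ℂ {y : H | ∃ p ∈ P, (g * p) ξ = y}).topologicalClosure : Set H) = _
  rw [hspan]
  have h1 : ((Submodule.map (g : H →ₗ[ℂ] H) (SubP P ξ)).topologicalClosure : Set H) =
      closure (g '' ((SubP P ξ : Submodule ℂ H) : Set H)) := by
    rw [Submodule.topologicalClosure_coe]
    congr 1
  rw [h1, ← u_image_closure g hg]
  rfl

theorem prj_subsp {g : H →L[ℂ] H} (hg : g ∈ unitary (H →L[ℂ] H)) :
    prj (subsp P ξ g) (subsp_closed P ξ g) = g * eP P ξ * star g := by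
  symm
  apply prj_unique
  · -- self-adjoint
    show star (g * eP P ξ * star g) = g * eP P ξ * star g
    rw [star_mul, star_mul, star_star, (eP_sa P ξ).star_eq, mul_assoc]
  · intro z
    have : (g * eP P ξ * star g) z = g (eP P ξ ((star g) z)) := rfl
    rw [this]
    have hmem : g (eP P ξ ((star g) z)) ∈ g '' ((Kcl P ξ : Submodule ℂ H) : Set H) :=
      ⟨_, eP_mem P ξ _, rfl⟩
    have := subsp_carrier P ξ hg
    rw [← this] at hmem
    exact hmem
  · intro z hz
    have hz' : z ∈ g '' ((Kcl P ξ : Submodule ℂ H) : Set H) := by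
      rw [← subsp_carrier P ξ hg]; exact hz
    obtain ⟨κ, hκ, rfl⟩ := hz'
    show g (eP P ξ ((star g) (g κ))) = g κ
    rw [u_star_apply g hg, eP_eq_self P ξ hκ]

theorem subsp_one : subsp P ξ (1 : H →L[ℂ] H) = Kcl P ξ := by
  have hset : {y : H | ∃ p ∈ P, ((1 : H →L[ℂ] H) * p) ξ = y} = {y : H | ∃ p ∈ P, p ξ = y} := by
    ext y; simp [one_mul]
  show (Submodule.span ℂ {y : H | ∃ p ∈ P, ((1 : H →L[ℂ] H) * p) ξ = y}).topologicalClosure = _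
  rw [hset, span_SubP]
  rfl

end subsplemmas

section L1sec

variable (M P : VonNeumannAlgebra H) (ξ : H) (u : ℕ → (H →L[ℂ] H))
  (hPM : ∀ x, x ∈ P → x ∈ M)
  (hrc : ∀ x ∈ M, (∀ p ∈ P, x * p = p * x) → x ∈ P)
  (htrM : ∀ x ∈ M, ∀ y ∈ M, ⟪(x * y) ξ, ξ⟫_ℂ = ⟪(y * x) ξ, ξ⟫_ℂ)
  (hcyc : Dense {y : H | ∃ x ∈ M, x ξ = y})
  (hcyc' : Dense {y : H | ∃ x ∈ M.commutant, x ξ = y})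
  (hu : IsBHONB M P ξ u)

theorem eP_idem : eP P ξ * eP P ξ = eP P ξ := prj_idem _ _

include hPM hrc htrM hcyc hcyc' hu in
theorem L1a (x : H →L[ℂ] H)
    (hxA : x ∈ Set.centralizer (Set.centralizer
      ((M : Set (H →L[ℂ] H)) ∪ {projCl {y : H | ∃ p ∈ P, p ξ = y}})))
    (hxP : ∀ p ∈ P, p * x = x * p) :
    x ξ ∈ Kcl P ξ := by
  obtain ⟨hu0, humem, huorth, hudense⟩ := hu
  have hsep := sep_of_dense_comm M ξ hcyc'
  -- x commutes with every rho q, q ∈ P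
  have hxr : ∀ q (hq : q ∈ P), rho M ξ htrM hcyc q (hPM q hq) * x =
      x * rho M ξ htrM hcyc q (hPM q hq) := by
    intro q hq
    exact Set.mem_centralizer_iff.1 hxA _ (rho_mem_CMe M P ξ htrM hcyc hPM hq)
  -- the key vanishing result for each m ≠ 0
  have key : ∀ m : ℕ, m ≠ 0 →
      prj (subsp P ξ (u m)) (subsp_closed P ξ (u m)) (x ξ) = 0 := by
    intro m hm
    have hum := (humem m).1
    have hun := (humem m).2.1
    set T : H →L[ℂ] H := eP P ξ * star (u m) * x * eP P ξ with hT
    have hT1 : eP P ξ * T = T := by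
      rw [hT]
      simp only [← mul_assoc, eP_idem]
    have hT2 : T * eP P ξ = T := by
      rw [hT]
      simp only [mul_assoc, eP_idem]
    have hTr : ∀ q (hq : q ∈ P), T * rho M ξ htrM hcyc q (hPM q hq) =
        rho M ξ htrM hcyc q (hPM q hq) * T := by
      intro q hq
      have c1 : Commute (rho M ξ htrM hcyc q (hPM q hq)) (eP P ξ) :=
        rho_comm_e' M P ξ htrM hcyc hPM hq
      have c2 : Commute (rho M ξ htrM hcyc q (hPM q hq)) (star (u m)) :=
        (rho_comm_M M ξ htrM hcyc _ (star_mem hum)).symm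
      have c3 : Commute (rho M ξ htrM hcyc q (hPM q hq)) x := hxr q hq
      have : Commute (rho M ξ htrM hcyc q (hPM q hq)) T := by
        rw [hT]
        exact ((c1.mul_right c2).mul_right c3).mul_right c1
      exact this.symm.eq
    obtain ⟨a, haP, hae, haξ⟩ :=
      T_factor M P ξ htrM hcyc hPM hcyc' T hT1 hT2 hTr
    set b := u m * a with hb
    have hbM : b ∈ M := mul_mem hum (hPM a haP)
    -- T ξ in terms of x ξ
    have hTξ : T ξ = eP P ξ ((star (u m)) (x ξ)) := by
      rw [hT]
      show eP P ξ ((star (u m)) (x (eP P ξ ξ))) = _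
      rw [eP_xi]
    -- b commutes with P
    have hbP : b ∈ P := by
      refine hrc b hbM ?_
      intro p hp
      have hp1 : star (u m) * p * u m ∈ P := (humem m).2.2.2 p hp
      -- vector computation
      have hv : (b * p) ξ = (p * b) ξ := by
        have e1 : (b * p) ξ = u m (a (p ξ)) := rfl
        have e2 : a (p ξ) = T (p ξ) := by
          have : a (eP P ξ (p ξ)) = T (p ξ) :=
            congrFun (congrArg (fun (B : H →L[ℂ] H) => ⇑B) hae) (p ξ)
          rwa [eP_apply_p P ξ hp] at this
        have e3 : T (p ξ) = (star (u m) * p * u m) (T ξ) := by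
          rw [hT]
          show eP P ξ ((star (u m)) (x (eP P ξ (p ξ)))) = _
          rw [eP_apply_p P ξ hp]
          have e4 : x (p ξ) = p (x ξ) := by
            have : (x * p) ξ = (p * x) ξ := by rw [hxP p hp]
            exact this
          rw [e4]
          have e5 : (star (u m)) (p (x ξ)) = (star (u m) * p * u m) ((star (u m)) (x ξ)) := by
            show (star (u m) * p) (x ξ) = ((star (u m) * p * u m) * star (u m)) (x ξ)
            congr 1
            rw [mul_assoc, mul_assoc]
            have : u m * star (u m) = 1 := (Unitary.mem_iff.1 hun).2
            rw [this, mul_one]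
          rw [e5]
          have e55 : eP P ξ ((star (u m) * p * u m) ((star (u m)) (x ξ))) =
              (star (u m) * p * u m) (eP P ξ ((star (u m)) (x ξ))) :=
            (eP_comm_P P ξ hp1 _).symm
          rw [e55, ← hTξ]
        have e6 : (b * p) ξ = u m ((star (u m) * p * u m) (T ξ)) := by
          rw [e1, e2, e3]
        have e7 : u m ((star (u m) * p * u m) (T ξ)) = p (u m (T ξ)) := by
          show (u m * (star (u m) * p * u m)) (T ξ) = (p * u m) (T ξ)
          congr 1
          rw [← mul_assoc, ← mul_assoc]
          have : u m * star (u m) = 1 := (Unitary.mem_iff.1 hun).2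
          rw [this, one_mul]
        have e8 : (p * b) ξ = p (u m (a ξ)) := rfl
        rw [e6, e7, e8, haξ]
      have h9 : (b * p - p * b) ξ = 0 := by
        have : (b * p - p * b) ξ = (b * p) ξ - (p * b) ξ := rfl
        rw [this, hv, sub_self]
      have h10 := hsep (b * p - p * b)
        (sub_mem (mul_mem hbM (hPM p hp)) (mul_mem (hPM p hp) hbM)) h9
      have := sub_eq_zero.1 h10
      exact this
    -- now b ξ lies in both subspaces
    have hprj : prj (subsp P ξ (u m)) (subsp_closed P ξ (u m)) (x ξ) = u m (T ξ) := by
      rw [prj_subsp P ξ hun]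
      show u m (eP P ξ ((star (u m)) (x ξ))) = u m (T ξ)
      rw [hTξ]
    have hbξ : u m (T ξ) = b ξ := by
      rw [hb]
      show u m (T ξ) = u m (a ξ)
      rw [haξ]
    have hmem1 : u m (T ξ) ∈ subsp P ξ (u m) := by
      rw [← hprj]
      exact prj_mem _ _ _
    have hmem2 : u m (T ξ) ∈ subsp P ξ (u 0) := by
      rw [hu0, subsp_one, hbξ]
      exact SubP_mem_Kcl P ξ ⟨b, hbP, rfl⟩
    have horth := huorth m 0 hm _ hmem1 _ hmem2
    rw [hprj]
    rw [← hprj] at horth ⊢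
    exact inner_self_eq_zero.1 horth
  -- now sum up
  have hsum := proj_sum (fun n => subsp P ξ (u n)) (fun n => subsp_closed P ξ (u n))
    huorth hudense (x ξ)
  have hsingle : HasSum (fun n => prj (subsp P ξ (u n)) (subsp_closed P ξ (u n)) (x ξ))
      (prj (subsp P ξ (u 0)) (subsp_closed P ξ (u 0)) (x ξ)) :=
    hasSum_single 0 (fun n hn => key n hn)
  have hxξ : x ξ = prj (subsp P ξ (u 0)) (subsp_closed P ξ (u 0)) (x ξ) :=
    hsum.unique hsingle
  have hmem := prj_mem (subsp P ξ (u 0)) (subsp_closed P ξ (u 0)) (x ξ)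
  rw [← hxξ] at hmem
  rw [hu0, subsp_one] at hmem
  exact hmem

include hPM hrc htrM hcyc hcyc' hu in
theorem L1comm (x : H →L[ℂ] H)
    (hxA : x ∈ Set.centralizer (Set.centralizer
      ((M : Set (H →L[ℂ] H)) ∪ {projCl {y : H | ∃ p ∈ P, p ξ = y}})))
    (hxP : ∀ p ∈ P, p * x = x * p) :
    x * eP P ξ = eP P ξ * x := by
  have hstarclosed : ∀ s ∈ (M : Set (H →L[ℂ] H)) ∪ {projCl {y : H | ∃ p ∈ P, p ξ = y}},
      star s ∈ (M : Set (H →L[ℂ] H)) ∪ {projCl {y : H | ∃ p ∈ P, p ξ = y}} := by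
    rintro s (hs | hs)
    · exact Or.inl (star_mem hs)
    · rw [Set.mem_singleton_iff] at hs
      subst hs
      right
      rw [Set.mem_singleton_iff, eP_eq_projCl, (eP_sa P ξ).star_eq]
  have hxA' : star x ∈ Set.centralizer (Set.centralizer
      ((M : Set (H →L[ℂ] H)) ∪ {projCl {y : H | ∃ p ∈ P, p ξ = y}})) := by
    apply star_mem_centralizer_of
    · intro s hs
      exact star_mem_centralizer_of hstarclosed hs
    · exact hxA
  have hxP' : ∀ p ∈ P, p * star x = star x * p := by
    intro p hp
    have h := hxP (star p) (star_mem hp)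
    calc p * star x = star (x * star p) := by rw [star_mul, star_star]
    _ = star (star p * x) := by rw [← h]
    _ = star x * p := by rw [star_mul, star_star]
  have h1 : x ξ ∈ Kcl P ξ := L1a M P ξ u hPM hrc htrM hcyc hcyc' hu x hxA hxP
  have h2 : (star x) ξ ∈ Kcl P ξ := L1a M P ξ u hPM hrc htrM hcyc hcyc' hu (star x) hxA' hxP'
  have hinv : ∀ z ∈ Kcl P ξ, x z ∈ Kcl P ξ := by
    apply Kcl_invariant
    rintro z ⟨p, hp, rfl⟩
    have : x (p ξ) = p (x ξ) := by
      have h := hxP p hp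
      show (x * p) ξ = _
      rw [← h]; rfl
    rw [this]
    exact Kcl_P_invariant P ξ hp _ h1
  have hinv' : ∀ z ∈ Kcl P ξ, (star x) z ∈ Kcl P ξ := by
    apply Kcl_invariant
    rintro z ⟨p, hp, rfl⟩
    have : (star x) (p ξ) = p ((star x) ξ) := by
      have h := hxP' p hp
      show (star x * p) ξ = _
      rw [← h]; rfl
    rw [this]
    exact Kcl_P_invariant P ξ hp _ h2
  ext z
  exact prj_comm (Kcl P ξ) (Kcl_closed P ξ) x hinv hinv' z

end L1sec

section partA

variable (M P : VonNeumannAlgebra H) (ξ : H) (u : ℕ → (H →L[ℂ] H))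
  (hPM : ∀ x, x ∈ P → x ∈ M)
  (hrc : ∀ x ∈ M, (∀ p ∈ P, x * p = p * x) → x ∈ P)
  (htrM : ∀ x ∈ M, ∀ y ∈ M, ⟪(x * y) ξ, ξ⟫_ℂ = ⟪(y * x) ξ, ξ⟫_ℂ)
  (hcyc : Dense {y : H | ∃ x ∈ M, x ξ = y})
  (hcyc' : Dense {y : H | ∃ x ∈ M.commutant, x ξ = y})
  (hu : IsBHONB M P ξ u)

theorem mini_contradiction (g w : H →L[ℂ] H)
    (hgn : ∀ ζ, ‖g ζ‖ ≤ ‖ζ‖)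
    (hw : w ∈ unitary (H →L[ℂ] H)) (hwe : ‖w - 1‖ < 1)
    {η : H} (hη : η ≠ 0) (hgη : g η = η) (hfη : (w * g * star w) η = 0) : False := by
  have hg0 : g ((star w) η) = 0 := by
    have h1 : (star w) ((w * g * star w) η) = 0 := by rw [hfη, map_zero]
    have h2 : (star w) ((w * g * star w) η) = g ((star w) η) := by
      show (star w) (w (g ((star w) η))) = g ((star w) η)
      exact u_star_apply w hw _
    rw [← h2, h1]
  have h3 : ‖η‖ ≤ ‖η - (star w) η‖ := by
    calc ‖η‖ = ‖g η‖ := by rw [hgη]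
    _ = ‖g (η - (star w) η)‖ := by rw [map_sub, hg0, sub_zero]
    _ ≤ ‖η - (star w) η‖ := hgn _
  have h4 : ‖η - (star w) η‖ ≤ ‖w - 1‖ * ‖η‖ := by
    have h5 : η - (star w) η = (1 - star w) η := by
      rw [ContinuousLinearMap.sub_apply, ContinuousLinearMap.one_apply]
    have h6 : ‖(1 : H →L[ℂ] H) - star w‖ = ‖w - 1‖ := by
      calc ‖(1 : H →L[ℂ] H) - star w‖ = ‖star ((1 : H →L[ℂ] H) - w)‖ := by
            rw [star_sub, star_one]
      _ = ‖(1 : H →L[ℂ] H) - w‖ := norm_star _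
      _ = ‖w - 1‖ := norm_sub_rev _ _
    calc ‖η - (star w) η‖ = ‖((1 : H →L[ℂ] H) - star w) η‖ := by rw [h5]
    _ ≤ ‖(1 : H →L[ℂ] H) - star w‖ * ‖η‖ := ContinuousLinearMap.le_opNorm _ _
    _ = ‖w - 1‖ * ‖η‖ := by rw [h6]
  have hpos : 0 < ‖η‖ := norm_pos_iff.2 hη
  nlinarith

theorem one_sub_prj_norm_le (U : Submodule ℂ H) (hU : IsClosed (U : Set H)) (ζ : H) :
    ‖ζ - prj U hU ζ‖ ≤ ‖ζ‖ := by
  have horth : ⟪prj U hU ζ, ζ - prj U hU ζ⟫_ℂ = 0 := by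
    have h1 := sub_prj_mem_orthogonal U hU ζ
    exact (Submodule.mem_orthogonal _ _).1 h1 _ (prj_mem U hU ζ)
  have hpyth : ‖ζ‖ ^ 2 = ‖prj U hU ζ‖ ^ 2 + ‖ζ - prj U hU ζ‖ ^ 2 := by
    have h2 : ζ = prj U hU ζ + (ζ - prj U hU ζ) := by abel
    calc ‖ζ‖ ^ 2 = ‖prj U hU ζ + (ζ - prj U hU ζ)‖ ^ 2 := by rw [← h2]
    _ = ‖prj U hU ζ‖ ^ 2 + ‖ζ - prj U hU ζ‖ ^ 2 := by
      have := norm_add_sq_eq_norm_sq_add_norm_sq_of_inner_eq_zero _ _ horth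
      nlinarith [this]
  nlinarith [norm_nonneg (ζ - prj U hU ζ), norm_nonneg ζ, norm_nonneg (prj U hU ζ)]

include hPM hrc htrM hcyc hcyc' hu in
theorem e_eq_f (w : H →L[ℂ] H) (hw : w ∈ unitary (H →L[ℂ] H))
    (hwnorm : ‖w - 1‖ < 1)
    (hwn1 : ∀ p ∈ P, w * p * star w ∈ P)
    (hwn2 : ∀ p ∈ P, star w * p * w ∈ P)
    (hwA : w ∈ Set.centralizer (Set.centralizer
      ((M : Set (H →L[ℂ] H)) ∪ {projCl {y : H | ∃ p ∈ P, p ξ = y}}))) :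
    w * eP P ξ * star w = eP P ξ := by
  set f := w * eP P ξ * star w with hf
  have hww : star w * w = 1 := (Unitary.mem_iff.1 hw).1
  have hww' : w * star w = 1 := (Unitary.mem_iff.1 hw).2
  have hfidem : f * f = f := by
    rw [hf]
    calc w * eP P ξ * star w * (w * eP P ξ * star w)
        = w * eP P ξ * (star w * w) * eP P ξ * star w := by
          simp only [mul_assoc]
    _ = w * eP P ξ * eP P ξ * star w := by rw [hww]; simp only [mul_assoc, one_mul]
    _ = w * eP P ξ * star w := by
          rw [mul_assoc w (eP P ξ) (eP P ξ), eP_idem]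
  have hfP : ∀ p ∈ P, p * f = f * p := by
    intro p hp
    have hp2 : star w * p * w ∈ P := hwn2 p hp
    have h1 : p * w = w * (star w * p * w) := by
      rw [← mul_assoc, ← mul_assoc, hww', one_mul]
    have h2 : (star w * p * w) * star w = star w * p := by
      rw [mul_assoc, hww', mul_one]
    calc p * f = (p * w) * eP P ξ * star w := by rw [hf]; simp only [mul_assoc]
    _ = w * ((star w * p * w) * eP P ξ) * star w := by rw [h1]; simp only [mul_assoc]
    _ = w * (eP P ξ * (star w * p * w)) * star w := by rw [eP_comm_P' P ξ hp2]
    _ = w * eP P ξ * ((star w * p * w) * star w) := by simp only [mul_assoc]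
    _ = w * eP P ξ * (star w * p) := by rw [h2]
    _ = f * p := by rw [hf]; simp only [mul_assoc]
  have hstarclosed : ∀ s ∈ (M : Set (H →L[ℂ] H)) ∪ {projCl {y : H | ∃ p ∈ P, p ξ = y}},
      star s ∈ (M : Set (H →L[ℂ] H)) ∪ {projCl {y : H | ∃ p ∈ P, p ξ = y}} := by
    rintro s (hs | hs)
    · exact Or.inl (star_mem hs)
    · rw [Set.mem_singleton_iff] at hs
      subst hs
      right
      rw [Set.mem_singleton_iff, eP_eq_projCl, (eP_sa P ξ).star_eq]
  have hwA' : star w ∈ Set.centralizer (Set.centralizer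
      ((M : Set (H →L[ℂ] H)) ∪ {projCl {y : H | ∃ p ∈ P, p ξ = y}})) := by
    apply star_mem_centralizer_of
    · intro s hs
      exact star_mem_centralizer_of hstarclosed hs
    · exact hwA
  have heA : eP P ξ ∈ Set.centralizer (Set.centralizer
      ((M : Set (H →L[ℂ] H)) ∪ {projCl {y : H | ∃ p ∈ P, p ξ = y}})) := by
    rw [← eP_eq_projCl]
    exact Set.subset_centralizer_centralizer (Or.inr rfl)
  have hfA : f ∈ Set.centralizer (Set.centralizer
      ((M : Set (H →L[ℂ] H)) ∪ {projCl {y : H | ∃ p ∈ P, p ξ = y}})) := by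
    rw [hf]
    exact Set.mul_mem_centralizer (Set.mul_mem_centralizer hwA heA) hwA'
  have hcomm : f * eP P ξ = eP P ξ * f :=
    L1comm M P ξ u hPM hrc htrM hcyc hcyc' hu f hfA hfP
  -- f and eP commute; now show e (1 - f) = 0 and (1 - e) f = 0
  have hgn : ∀ ζ, ‖eP P ξ ζ‖ ≤ ‖ζ‖ := fun ζ => prj_apply_norm_le _ _ ζ
  have he1f : ∀ ζ, eP P ξ (ζ - f ζ) = 0 := by
    intro ζ
    by_contra hne
    set η := eP P ξ (ζ - f ζ) with hη
    have hgη : eP P ξ η = η := by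
      rw [hη]
      exact eP_eq_self P ξ (eP_mem P ξ _)
    have hfη : f η = 0 := by
      have h1 : f (eP P ξ (ζ - f ζ)) = eP P ξ (f (ζ - f ζ)) := by
        have := congrFun (congrArg (fun (B : H →L[ℂ] H) => ⇑B) hcomm) (ζ - f ζ)
        exact this
      have h2 : f (ζ - f ζ) = 0 := by
        rw [map_sub]
        have : f (f ζ) = (f * f) ζ := rfl
        rw [this, hfidem, sub_self]
      rw [hη, h1, h2, map_zero]
    exact mini_contradiction (eP P ξ) w hgn hw hwnorm hne hgη hfη
  have h1ef : ∀ ζ, f ζ - eP P ξ (f ζ) = 0 := by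
    intro ζ
    by_contra hne
    set η := f ζ - eP P ξ (f ζ) with hη
    have hgη : η - eP P ξ η = η := by
      rw [hη]
      have h3 : eP P ξ (f ζ - eP P ξ (f ζ)) = 0 := by
        rw [map_sub]
        have : eP P ξ (eP P ξ (f ζ)) = eP P ξ (f ζ) := eP_eq_self P ξ (eP_mem P ξ _)
        rw [this, sub_self]
      rw [h3, sub_zero]
    have hgn' : ∀ ζ', ‖ζ' - eP P ξ ζ'‖ ≤ ‖ζ'‖ := fun ζ' => one_sub_prj_norm_le _ _ ζ'
    -- w (1 - e) (star w) η = (1 - f) η = 0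
    have hfη : (w * (1 - eP P ξ) * star w) η = 0 := by
      have hexp : w * (1 - eP P ξ) * star w = 1 - f := by
        rw [mul_sub, mul_one, sub_mul, hww', hf]
      rw [hexp]
      have h4 : (1 - f) η = η - f η := rfl
      rw [h4, hη]
      have h5 : f (f ζ - eP P ξ (f ζ)) = f (f ζ) - f (eP P ξ (f ζ)) := map_sub _ _ _
      have h6 : f (f ζ) = f ζ := by
        have : f (f ζ) = (f * f) ζ := rfl
        rw [this, hfidem]
      have h7 : f (eP P ξ (f ζ)) = eP P ξ (f (f ζ)) := by
        have := congrFun (congrArg (fun (B : H →L[ℂ] H) => ⇑B) hcomm) (f ζ)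
        exact this
      rw [h5, h6, h7, h6]
      abel
    -- reformulate with g := 1 - eP
    have hgη' : (1 - eP P ξ) η = η := by
      have : (1 - eP P ξ) η = η - eP P ξ η := rfl
      rw [this, hgη]
    have hgn'' : ∀ ζ', ‖(1 - eP P ξ) ζ'‖ ≤ ‖ζ'‖ := by
      intro ζ'
      have : (1 - eP P ξ) ζ' = ζ' - eP P ξ ζ' := rfl
      rw [this]; exact hgn' ζ'
    exact mini_contradiction (1 - eP P ξ) w hgn'' hw hwnorm hne hgη' hfη
  -- combine : e = e f = f
  have hef : ∀ ζ, eP P ξ ζ = eP P ξ (f ζ) := by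
    intro ζ
    have := he1f ζ
    rw [map_sub, sub_eq_zero] at this
    exact this
  have hfe : ∀ ζ, f ζ = eP P ξ (f ζ) := by
    intro ζ
    have := h1ef ζ
    rw [sub_eq_zero] at this
    exact this
  ext ζ
  show f ζ = eP P ξ ζ
  rw [hfe ζ, ← hef ζ]

end partA

section partC

variable (N P : VonNeumannAlgebra H) (ξ : H) (v : ℕ → (H →L[ℂ] H))
  (hPN : ∀ x, x ∈ P → x ∈ N)
  (htrN : ∀ x ∈ N, ∀ y ∈ N, ⟪(x * y) ξ, ξ⟫_ℂ = ⟪(y * x) ξ, ξ⟫_ℂ)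
  (hvN : ∀ n, v n ∈ N ∧ IsNormalizer P (v n))
  (hdense : Dense (↑(⨆ n, subsp P ξ (v n)) : Set H))

theorem commute_star_of_unitary {w y : H →L[ℂ] H} (hw : w ∈ unitary (H →L[ℂ] H))
    (h : y * w = w * y) : y * star w = star w * y := by
  have h1 : star w * w = 1 := (Unitary.mem_iff.1 hw).1
  have h2 : w * star w = 1 := (Unitary.mem_iff.1 hw).2
  calc y * star w = 1 * (y * star w) := by rw [one_mul]
  _ = star w * ((w * y) * star w) := by rw [← h1]; simp only [mul_assoc]
  _ = star w * ((y * w) * star w) := by rw [h]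
  _ = star w * (y * (w * star w)) := by simp only [mul_assoc]
  _ = star w * y := by rw [h2, mul_one]

include hPN htrN hvN hdense in
theorem genN :
    Set.centralizer (Set.centralizer ((P : Set (H →L[ℂ] H)) ∪ Set.range v)) =
      (N : Set (H →L[ℂ] H)) := by
  set S₀ : Set (H →L[ℂ] H) :=
    (P : Set (H →L[ℂ] H)) ∪ Set.range v ∪ (star '' Set.range v) with hS₀
  set W := Algebra.adjoin ℂ S₀ with hW
  -- membership of W in N
  have hWN : ∀ w ∈ W, w ∈ N := by
    intro w hw
    induction hw using Algebra.adjoin_induction with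
    | mem x hx =>
      rcases hx with (hx | hx) | hx
      · exact hPN x hx
      · obtain ⟨n, rfl⟩ := hx; exact (hvN n).1
      · obtain ⟨z, ⟨n, rfl⟩, rfl⟩ := hx; exact star_mem (hvN n).1
    | algebraMap r => exact N.toSubalgebra.algebraMap_mem r
    | add x y hx hy ihx ihy => exact add_mem ihx ihy
    | mul x y hx hy ihx ihy => exact mul_mem ihx ihy
  -- commuting of centralizer elements with W
  have hyW : ∀ y ∈ Set.centralizer ((P : Set (H →L[ℂ] H)) ∪ Set.range v),
      ∀ w ∈ W, y * w = w * y := by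
    intro y hy w hw
    induction hw using Algebra.adjoin_induction with
    | mem x hx =>
      rcases hx with (hx | hx) | hx
      · exact (Set.mem_centralizer_iff.1 hy x (Or.inl hx)).symm
      · exact (Set.mem_centralizer_iff.1 hy x (Or.inr hx)).symm
      · obtain ⟨z, hz, rfl⟩ := hx
        obtain ⟨n, rfl⟩ := hz
        exact commute_star_of_unitary ((hvN n).2.1)
          (Set.mem_centralizer_iff.1 hy _ (Or.inr ⟨n, rfl⟩)).symm
    | algebraMap r => exact (Algebra.commutes r y).symm
    | add x z hx hz ihx ihz => rw [mul_add, add_mul, ihx, ihz]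
    | mul x z hx hz ihx ihz =>
      rw [← mul_assoc, ihx, mul_assoc, ihz, mul_assoc]
  -- star of a centralizer element is a centralizer element
  have hstar : ∀ y ∈ Set.centralizer ((P : Set (H →L[ℂ] H)) ∪ Set.range v),
      star y ∈ Set.centralizer ((P : Set (H →L[ℂ] H)) ∪ Set.range v) := by
    intro y hy
    rw [Set.mem_centralizer_iff]
    rintro s (hs | hs)
    · have h := Set.mem_centralizer_iff.1 hy (star s) (Or.inl (star_mem hs))
      calc s * star y = star (y * star s) := by rw [star_mul, star_star]
      _ = star (star s * y) := by rw [h]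
      _ = star y * s := by rw [star_mul, star_star]
    · obtain ⟨n, rfl⟩ := hs
      have h1 : y * v n = v n * y := (Set.mem_centralizer_iff.1 hy _ (Or.inr ⟨n, rfl⟩)).symm
      have h2 : y * star (v n) = star (v n) * y :=
        commute_star_of_unitary ((hvN n).2.1) h1
      have := congrArg star h2
      rw [star_mul, star_mul, star_star] at this
      exact this
  -- the dense subspace W ξ
  set WS : Submodule ℂ H :=
    { carrier := {z : H | ∃ w ∈ W, w ξ = z}
      add_mem' := by
        rintro a b ⟨w₁, hw₁, rfl⟩ ⟨w₂, hw₂, rfl⟩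
        exact ⟨w₁ + w₂, add_mem hw₁ hw₂, rfl⟩
      zero_mem' := ⟨0, zero_mem W, rfl⟩
      smul_mem' := by
        rintro c a ⟨w₁, hw₁, rfl⟩
        exact ⟨c • w₁, Subalgebra.smul_mem W hw₁ c, rfl⟩ } with hWS
  have hWSdense : Dense (WS : Set H) := by
    rw [← dense_closure]
    have hsub : (↑(⨆ n, subsp P ξ (v n)) : Set H) ⊆ closure (WS : Set H) := by
      have hle : (⨆ n, subsp P ξ (v n)) ≤ WS.topologicalClosure := by
        refine iSup_le ?_
        intro n
        refine Submodule.topologicalClosure_minimal _ ?_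
          (Submodule.isClosed_topologicalClosure _)
        rw [Submodule.span_le]
        rintro z ⟨p, hp, rfl⟩
        refine Submodule.le_topologicalClosure _ ?_
        refine ⟨v n * p, ?_, rfl⟩
        exact mul_mem (Algebra.subset_adjoin (Or.inl (Or.inr ⟨n, rfl⟩)))
          (Algebra.subset_adjoin (Or.inl (Or.inl hp)))
      intro z hz
      exact hle hz
    exact Dense.mono hsub hdense
  -- main claim : centralizer elements intertwine N at ξ
  have hC : ∀ y ∈ Set.centralizer ((P : Set (H →L[ℂ] H)) ∪ Set.range v),
      ∀ g ∈ N, y (g ξ) = g (y ξ) := by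
    intro y hy g hg
    have hyW' := hyW y hy
    have hysW := hyW (star y) (hstar y hy)
    -- approximate (star y) ξ by W ξ
    have hmem : (star y) ξ ∈ closure (WS : Set H) := by
      rw [hWSdense.closure_eq]; trivial
    rw [mem_closure_iff_seq_limit] at hmem
    obtain ⟨f, hf, hlim⟩ := hmem
    choose wk hwk hwkξ using hf
    have hlim' : Filter.Tendsto (fun k => (wk k) ξ) Filter.atTop (nhds ((star y) ξ)) := by
      have : (fun k => (wk k) ξ) = f := funext hwkξ
      rw [this]; exact hlim
    obtain ⟨β, hβlim⟩ := star_seq_tendsto N ξ htrN wk (fun k => hWN _ (hwk k)) hlim'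
    -- identify β with y ξ
    have hβ : β = y ξ := by
      have hperp : ∀ w'' ∈ W, ⟪β - y ξ, w'' ξ⟫_ℂ = 0 := by
        intro w'' hw''
        have hterm : ∀ k, ⟪(star (wk k)) ξ, w'' ξ⟫_ℂ = ⟪ξ, w'' ((wk k) ξ)⟫_ℂ := by
          intro k
          have h1 : ⟪(star (wk k)) ξ, w'' ξ⟫_ℂ = ⟪ξ, (wk k * w'') ξ⟫_ℂ := by
            rw [inner_star_left, star_star]; rfl
          have h2 : ⟪ξ, (wk k * w'') ξ⟫_ℂ = ⟪ξ, (w'' * wk k) ξ⟫_ℂ := by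
            have htr := htrN (wk k) (hWN _ (hwk k)) w'' (hWN _ hw'')
            calc ⟪ξ, (wk k * w'') ξ⟫_ℂ = (starRingEnd ℂ) ⟪(wk k * w'') ξ, ξ⟫_ℂ := by
                  rw [inner_conj_symm]
            _ = (starRingEnd ℂ) ⟪(w'' * wk k) ξ, ξ⟫_ℂ := by rw [htr]
            _ = ⟪ξ, (w'' * wk k) ξ⟫_ℂ := by rw [inner_conj_symm]
          rw [h1, h2]; rfl
        have hlim1 : Filter.Tendsto (fun k => ⟪(star (wk k)) ξ, w'' ξ⟫_ℂ) Filter.atTop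
            (nhds ⟪β, w'' ξ⟫_ℂ) := Filter.Tendsto.inner hβlim tendsto_const_nhds
        have hlim2 : Filter.Tendsto (fun k => ⟪ξ, w'' ((wk k) ξ)⟫_ℂ) Filter.atTop
            (nhds ⟪ξ, w'' ((star y) ξ)⟫_ℂ) :=
          Filter.Tendsto.inner tendsto_const_nhds ((w''.continuous.tendsto _).comp hlim')
        have heq : ⟪β, w'' ξ⟫_ℂ = ⟪ξ, w'' ((star y) ξ)⟫_ℂ := by
          refine tendsto_nhds_unique ?_ hlim2
          have : (fun k => ⟪(star (wk k)) ξ, w'' ξ⟫_ℂ) =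
              fun k => ⟪ξ, w'' ((wk k) ξ)⟫_ℂ := funext hterm
          rw [← this]; exact hlim1
        have h3 : w'' ((star y) ξ) = (star y) (w'' ξ) := by
          have h4 : w'' * star y = star y * w'' := (hysW w'' hw'').symm
          calc w'' ((star y) ξ) = (w'' * star y) ξ := rfl
          _ = (star y * w'') ξ := by rw [h4]
          _ = (star y) (w'' ξ) := rfl
        have h5 : ⟪ξ, (star y) (w'' ξ)⟫_ℂ = ⟪y ξ, w'' ξ⟫_ℂ := by
          rw [inner_star_right, star_star]
        rw [inner_sub_left, heq, h3, h5, sub_self]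
      have := perp_zero_of_dense hWSdense (v := β - y ξ) ?_
      · exact sub_eq_zero.1 this
      · rintro z ⟨w'', hw'', rfl⟩
        exact hperp w'' hw''
    -- final computation
    have hfin : ∀ w'' ∈ W, ⟪y (g ξ) - g (y ξ), w'' ξ⟫_ℂ = 0 := by
      intro w'' hw''
      have h1 : ⟪y (g ξ), w'' ξ⟫_ℂ = ⟪g ξ, w'' ((star y) ξ)⟫_ℂ := by
        rw [inner_star_left]
        congr 1
        have h4 : star y * w'' = w'' * star y := hysW w'' hw''
        calc (star y) (w'' ξ) = (star y * w'') ξ := rfl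
        _ = (w'' * star y) ξ := by rw [h4]
        _ = w'' ((star y) ξ) := rfl
      have hterm : ∀ k, ⟪g ξ, w'' ((wk k) ξ)⟫_ℂ = ⟪g ((star (wk k)) ξ), w'' ξ⟫_ℂ := by
        intro k
        have h2 : ⟪g ξ, w'' ((wk k) ξ)⟫_ℂ = ⟪(star (wk k) * (star w'' * g)) ξ, ξ⟫_ℂ := by
          have : w'' ((wk k) ξ) = (w'' * wk k) ξ := rfl
          rw [this, inner_star_right, star_mul]
          rfl
        have h3 := htrN (star (wk k)) (star_mem (hWN _ (hwk k)))
          (star w'' * g) (mul_mem (star_mem (hWN _ hw'')) hg)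
        have h4 : ⟪(star w'' * g * star (wk k)) ξ, ξ⟫_ℂ =
            ⟪g ((star (wk k)) ξ), w'' ξ⟫_ℂ := by
          have h5 : (star w'' * g * star (wk k)) ξ = (star w'') (g ((star (wk k)) ξ)) := rfl
          rw [h5, inner_star_left, star_star]
        rw [h2, h3, h4]
      have hlim3 : Filter.Tendsto (fun k => ⟪g ξ, w'' ((wk k) ξ)⟫_ℂ) Filter.atTop
          (nhds ⟪g ξ, w'' ((star y) ξ)⟫_ℂ) :=
        Filter.Tendsto.inner tendsto_const_nhds ((w''.continuous.tendsto _).comp hlim')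
      have hlim4 : Filter.Tendsto (fun k => ⟪g ((star (wk k)) ξ), w'' ξ⟫_ℂ) Filter.atTop
          (nhds ⟪g β, w'' ξ⟫_ℂ) :=
        Filter.Tendsto.inner ((g.continuous.tendsto _).comp hβlim) tendsto_const_nhds
      have heq2 : ⟪g ξ, w'' ((star y) ξ)⟫_ℂ = ⟪g β, w'' ξ⟫_ℂ := by
        refine tendsto_nhds_unique ?_ hlim4
        have : (fun k => ⟪g ξ, w'' ((wk k) ξ)⟫_ℂ) =
            fun k => ⟪g ((star (wk k)) ξ), w'' ξ⟫_ℂ := funext hterm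
        rw [← this]; exact hlim3
      rw [inner_sub_left, h1, heq2, hβ, sub_self]
    have := perp_zero_of_dense hWSdense (v := y (g ξ) - g (y ξ)) ?_
    · exact sub_eq_zero.1 this
    · rintro z ⟨w'', hw'', rfl⟩
      exact hfin w'' hw''
  -- now prove the set equality
  apply Set.eq_of_subset_of_subset
  · -- ⊆ N
    have h1 : (P : Set (H →L[ℂ] H)) ∪ Set.range v ⊆ (N : Set (H →L[ℂ] H)) := by
      rintro x (hx | ⟨n, rfl⟩)
      · exact hPN x hx
      · exact (hvN n).1
    have h2 := Set.centralizer_subset (Set.centralizer_subset h1)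
    have h3 : Set.centralizer (Set.centralizer (N : Set (H →L[ℂ] H))) =
        (N : Set (H →L[ℂ] H)) := N.centralizer_centralizer'
    exact h3 ▸ h2
  · -- N ⊆ double centralizer
    intro g hg
    rw [Set.mem_centralizer_iff]
    intro y hy
    have hyz : y * g = g * y := by
      refine eq_of_dense_eqon hWSdense ?_
      rintro z ⟨w, hw, rfl⟩
      show y (g (w ξ)) = g (y (w ξ))
      have h1 : g (w ξ) = (g * w) ξ := rfl
      have h2 : y ((g * w) ξ) = (g * w) (y ξ) := hC y hy (g * w) (mul_mem hg (hWN _ hw))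
      have h3 : y (w ξ) = w (y ξ) := by
        have h4 : y * w = w * y := hyW y hy w hw
        calc y (w ξ) = (y * w) ξ := rfl
        _ = (w * y) ξ := by rw [h4]
        _ = w (y ξ) := rfl
      rw [h1, h2, h3]
      rfl
    exact hyz
  
end partC

theorem prj_range (U : Submodule ℂ H) (hU : IsClosed (U : Set H)) :
    (U : Set H) = Set.range (prj U hU) := by
  ext z
  constructor
  · intro hz
    exact ⟨z, prj_eq_self U hU hz⟩
  · rintro ⟨w, rfl⟩
    exact prj_mem U hU w

end S16


/-- transfer of bounded homogeneous orthonormal bases of normalizers from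
`M` to a II₁ factor `N` with the same basic construction. -/
theorem stmt_16 (M N P : VonNeumannAlgebra H) (τM τN : (H →L[ℂ] H) →ₗ[ℂ] ℂ)
    (hM : IsIIOneFactor M τM) (hN : IsIIOneFactor N τN)
    (hPM : ∀ x, x ∈ P → x ∈ M) (hPN : ∀ x, x ∈ P → x ∈ N)
    (hrc : ∀ x ∈ M, (∀ p ∈ P, x * p = p * x) → x ∈ P)
    (ξ : H)
    (htrM : ∀ x ∈ M, ∀ y ∈ M, (inner ℂ ((x * y) ξ) ξ : ℂ) = (inner ℂ ((y * x) ξ) ξ : ℂ))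
    (htrN : ∀ x ∈ N, ∀ y ∈ N, (inner ℂ ((x * y) ξ) ξ : ℂ) = (inner ℂ ((y * x) ξ) ξ : ℂ))
    (hcyc : Dense {y : H | ∃ x ∈ M, x ξ = y})
    (hcyc' : Dense {y : H | ∃ x ∈ M.commutant, x ξ = y})
    (hBC : Set.centralizer (Set.centralizer
        ((M : Set (H →L[ℂ] H)) ∪ {projCl {y : H | ∃ p ∈ P, p ξ = y}})) =
      Set.centralizer (Set.centralizer
        ((N : Set (H →L[ℂ] H)) ∪ {projCl {y : H | ∃ p ∈ P, p ξ = y}})))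
    (u : ℕ → (H →L[ℂ] H)) (hu : IsBHONB M P ξ u)
    (v : ℕ → (H →L[ℂ] H)) (hv0 : v 0 = 1)
    (hvN : ∀ n, v n ∈ N ∧ IsNormalizer P (v n))
    (hclose : ∀ n, ‖v n - u n‖ < 1) :
    (∀ n, subsp P ξ (u n) = subsp P ξ (v n)) ∧
      IsBHONB N P ξ v ∧
      Set.centralizer (Set.centralizer
        ((P : Set (H →L[ℂ] H)) ∪ Set.range v)) = (N : Set (H →L[ℂ] H)) := by
  classical
  obtain ⟨hu0, humem, huorth, hudense⟩ := hu
  have hu' : IsBHONB M P ξ u := ⟨hu0, humem, huorth, hudense⟩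
  -- part A
  have hsub : ∀ n, subsp P ξ (u n) = subsp P ξ (v n) := by
    intro n
    have hum : u n ∈ M := (humem n).1
    have huu : u n ∈ unitary (H →L[ℂ] H) := (humem n).2.1
    have hvn : v n ∈ N := (hvN n).1
    have hvu : v n ∈ unitary (H →L[ℂ] H) := (hvN n).2.1
    set w : H →L[ℂ] H := star (v n) * u n with hw
    have hwu : w ∈ unitary (H →L[ℂ] H) := mul_mem (Unitary.star_mem hvu) huu
    have hwnorm : ‖w - 1‖ < 1 := by
      have h1 : w - 1 = star (v n) * (u n - v n) := by
        rw [mul_sub, hw]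
        have : star (v n) * v n = 1 := (Unitary.mem_iff.1 hvu).1
        rw [this]
      have h2 : ‖star (v n) * (u n - v n)‖ ≤ ‖u n - v n‖ :=
        S16.u_comp_norm_le (star (v n)) (Unitary.star_mem hvu) (u n - v n)
      have h3 : ‖u n - v n‖ = ‖v n - u n‖ := norm_sub_rev _ _
      rw [h1]
      calc ‖star (v n) * (u n - v n)‖ ≤ ‖u n - v n‖ := h2
      _ = ‖v n - u n‖ := h3
      _ < 1 := hclose n
    have hsw : star w = star (u n) * v n := by
      rw [hw, star_mul, star_star]
    have hwn1 : ∀ p ∈ P, w * p * star w ∈ P := by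
      intro p hp
      have h1 : w * p * star w = star (v n) * (u n * p * star (u n)) * v n := by
        rw [hw, hsw]; simp only [mul_assoc]
      rw [h1]
      exact (hvN n).2.2.2 _ ((humem n).2.2.1 p hp)
    have hwn2 : ∀ p ∈ P, star w * p * w ∈ P := by
      intro p hp
      have h1 : star w * p * w = star (u n) * (v n * p * star (v n)) * u n := by
        rw [hw, hsw]; simp only [mul_assoc]
      rw [h1]
      exact (humem n).2.2.2 _ ((hvN n).2.2.1 p hp)
    have hstarclosed : ∀ s ∈ (M : Set (H →L[ℂ] H)) ∪ {projCl {y : H | ∃ p ∈ P, p ξ = y}},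
        star s ∈ (M : Set (H →L[ℂ] H)) ∪ {projCl {y : H | ∃ p ∈ P, p ξ = y}} := by
      rintro s (hs | hs)
      · exact Or.inl (star_mem hs)
      · rw [Set.mem_singleton_iff] at hs
        subst hs
        right
        rw [Set.mem_singleton_iff, S16.eP_eq_projCl, (S16.eP_sa P ξ).star_eq]
    have hA_u : u n ∈ Set.centralizer (Set.centralizer
        ((M : Set (H →L[ℂ] H)) ∪ {projCl {y : H | ∃ p ∈ P, p ξ = y}})) :=
      Set.subset_centralizer_centralizer (Or.inl hum)
    have hA_v : v n ∈ Set.centralizer (Set.centralizer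
        ((M : Set (H →L[ℂ] H)) ∪ {projCl {y : H | ∃ p ∈ P, p ξ = y}})) := by
      rw [hBC]
      exact Set.subset_centralizer_centralizer (Or.inl hvn)
    have hA_sv : star (v n) ∈ Set.centralizer (Set.centralizer
        ((M : Set (H →L[ℂ] H)) ∪ {projCl {y : H | ∃ p ∈ P, p ξ = y}})) := by
      apply S16.star_mem_centralizer_of
      · intro s hs
        exact S16.star_mem_centralizer_of hstarclosed hs
      · exact hA_v
    have hwA : w ∈ Set.centralizer (Set.centralizer
        ((M : Set (H →L[ℂ] H)) ∪ {projCl {y : H | ∃ p ∈ P, p ξ = y}})) :=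
      Set.mul_mem_centralizer hA_sv hA_u
    have hef := S16.e_eq_f M P ξ u hPM hrc htrM hcyc hcyc' hu' w hwu hwnorm hwn1 hwn2 hwA
    -- u n = v n * w
    have huvw : u n = v n * w := by
      rw [hw, ← mul_assoc]
      have : v n * star (v n) = 1 := (Unitary.mem_iff.1 hvu).2
      rw [this, one_mul]
    have huv : u n * S16.eP P ξ * star (u n) = v n * S16.eP P ξ * star (v n) := by
      calc u n * S16.eP P ξ * star (u n)
          = (v n * w) * S16.eP P ξ * star (v n * w) := by rw [← huvw]
      _ = v n * (w * S16.eP P ξ * star w) * star (v n) := by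
          rw [star_mul]; simp only [mul_assoc]
      _ = v n * S16.eP P ξ * star (v n) := by rw [hef]
    -- conclude subspace equality
    apply SetLike.ext'
    calc ((subsp P ξ (u n) : Submodule ℂ H) : Set H)
        = Set.range (S16.prj (subsp P ξ (u n)) (S16.subsp_closed P ξ (u n))) :=
          S16.prj_range _ _
    _ = Set.range (u n * S16.eP P ξ * star (u n)) := by rw [S16.prj_subsp P ξ huu]
    _ = Set.range (v n * S16.eP P ξ * star (v n)) := by rw [huv]
    _ = Set.range (S16.prj (subsp P ξ (v n)) (S16.subsp_closed P ξ (v n))) := by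
          rw [S16.prj_subsp P ξ hvu]
    _ = ((subsp P ξ (v n) : Submodule ℂ H) : Set H) := (S16.prj_range _ _).symm
  -- part B
  have horth' : ∀ i j, i ≠ j → ∀ y ∈ subsp P ξ (v i), ∀ z ∈ subsp P ξ (v j),
      (inner ℂ y z : ℂ) = 0 := by
    intro i j hij y hy z hz
    exact huorth i j hij y (hsub i ▸ hy) z (hsub j ▸ hz)
  have hdense' : Dense (↑(⨆ n, subsp P ξ (v n)) : Set H) := by
    have : (⨆ n, subsp P ξ (v n)) = ⨆ n, subsp P ξ (u n) := by
      congr 1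
      funext n
      exact (hsub n).symm
    rw [this]
    exact hudense
  have hB : IsBHONB N P ξ v := ⟨hv0, hvN, horth', hdense'⟩
  -- part C
  have hgen := S16.genN N P ξ v hPN htrN hvN hdense'
  exact ⟨hsub, hB, hgen⟩
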